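/- arXiv:2112.00545 — 4 statements merged into one kernel-verified Lean document; each statement's English description precedes it below -/
import Mathlib

section
/- Let q be a prime power and n ≥ 2. The non-degenerate Hermitian variety H(n,q^2) has exactly (q^{n+1} + (-1)^n)(q^n - (-1)^n)/(q^2 - 1) points; in particular, the Hermitian curve H(2,q^2) has exactly q^3 + 1 points. -/
open Projectivization
open scoped LinearAlgebra.Projectivization

variable (F : Type) [Field F] [Fintype F]

/-- The projective space PG(n, |F|) over `F`, as the projectivization of `Fin (n+1) → F`. -/
abbrev PG (n : ℕ) := ℙ F (Fin (n+1) → F)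

/-- The Hermitian variety `H(n,q^2)`: points `[x_0 : ... : x_n]` with
`x_0^{q+1} + ... + x_n^{q+1} = 0`. -/
def Herm (q n : ℕ) : Set (PG F n) :=
  {p | ∑ i, (p.rep i) ^ (q+1) = 0}

/-- The set of points of `PG(n,q^2)` lying on the line given by a `2`-dimensional subspace. -/
def lineSet (n : ℕ) (W : Submodule F (Fin (n+1) → F)) : Set (PG F n) :=
  {p | p.submodule ≤ W}

/-- `W` determines a line of `PG(n,q^2)`, i.e. it is a `2`-dimensional subspace. -/
def IsLine (n : ℕ) (W : Submodule F (Fin (n+1) → F)) : Prop :=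
  Module.finrank F W = 2

/-- A line is tangent to `H(n,q^2)` if it meets it in exactly one point. -/
def IsTangent (q n : ℕ) (W : Submodule F (Fin (n+1) → F)) : Prop :=
  IsLine F n W ∧ (lineSet F n W ∩ Herm F q n).ncard = 1

/-- The graph `NU(n+1,q^2)`: vertices are points off the Hermitian variety, two distinct
vertices adjacent iff the line joining them is tangent to `H(n,q^2)`. -/
def NU (q n : ℕ) : SimpleGraph {p : PG F n // p ∉ Herm F q n} where
  Adj u v := u ≠ v ∧ IsTangent F q n (Submodule.span F {u.1.rep, v.1.rep})
  symm := ⟨by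
    rintro u v ⟨h1, h2⟩
    exact ⟨h1.symm, by rwa [Set.pair_comm]⟩⟩
  loopless := ⟨fun u h => h.1 rfl⟩

/-- A strongly regular graph with parameters `(v, k, l, m)`. -/
def IsSRG {V : Type} (G : SimpleGraph V) (v k l m : ℤ) : Prop :=
  (Nat.card V : ℤ) = v ∧
  (∀ x, (Nat.card (G.neighborSet x) : ℤ) = k) ∧
  (∀ x y, G.Adj x y → (Nat.card (G.commonNeighbors x y) : ℤ) = l) ∧
  (∀ x y, x ≠ y → ¬ G.Adj x y → (Nat.card (G.commonNeighbors x y) : ℤ) = m)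


section HermAux

open Finset

variable {K : Type} [Field K] [Fintype K] {q : ℕ}

section basics
variable (hq : IsPrimePow q) (hF : Fintype.card K = q ^ 2)
include hq hF

lemma charp_aux : ∃ p k : ℕ, p.Prime ∧ 0 < k ∧ q = p ^ k ∧ CharP K p := by
  obtain ⟨p, k, hp, hk, rfl⟩ := hq
  refine ⟨p, k, hp.nat_prime, hk, rfl, ?_⟩
  have h1 : CharP K (ringChar K) := ringChar.charP K
  obtain ⟨m, hp', hcard⟩ := FiniteField.card K (ringChar K)
  rw [hF, ← pow_mul] at hcard
  have hdvd : p ∣ ringChar K ^ (m : ℕ) := by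
    rw [← hcard]
    exact dvd_pow_self p (by positivity)
  have := (Nat.Prime.dvd_of_dvd_pow (hp.nat_prime) hdvd)
  have : p = ringChar K := ((Nat.prime_dvd_prime_iff_eq hp.nat_prime hp').mp this)
  rwa [this]

lemma sum_pow_q {ι : Type*} (s : Finset ι) (f : ι → K) :
    (∑ i ∈ s, f i) ^ q = ∑ i ∈ s, f i ^ q := by
  obtain ⟨p, k, hp, hk, rfl, hchar⟩ := charp_aux hq hF
  haveI := hchar
  haveI : ExpChar K p := ExpChar.prime hp
  exact sum_pow_char_pow p k s f

omit hF in lemma two_le_q : 2 ≤ q := hq.two_le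

omit hq in
lemma pow_card_self (x : K) : x ^ q ^ 2 = x := by
  rw [← hF]; exact FiniteField.pow_card x

omit hq in
lemma term_fixed (x : K) : (x ^ (q + 1)) ^ q = x ^ (q + 1) := by
  rw [← pow_mul]
  have h : (q + 1) * q = q ^ 2 + q := by ring
  rw [h, pow_add, pow_card_self hF, ← pow_succ']

omit hq in
lemma card_roots_of_dvd {d : ℕ} (hd : 0 < d) (hdvd : d ∣ q ^ 2 - 1) [DecidableEq K] :
    ({x : K | x ^ d = 1} : Finset K).card = d := by
  obtain ⟨g, hg⟩ := IsCyclic.exists_generator (α := Kˣ)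
  have horder : orderOf g = q ^ 2 - 1 := by
    rw [orderOf_eq_card_of_forall_mem_zpowers hg, Nat.card_eq_fintype_card, Fintype.card_units, hF]
  have hq2 : 0 < q ^ 2 - 1 := by
    have : 1 < Fintype.card K := Fintype.one_lt_card
    omega
  have hprim : IsPrimitiveRoot ((g : Kˣ) : K) (q ^ 2 - 1) := by
    rw [IsPrimitiveRoot.coe_units_iff, ← horder]
    exact IsPrimitiveRoot.orderOf (g : Kˣ)
  obtain ⟨e, he⟩ := hdvd
  have hprim2 : IsPrimitiveRoot (((g : Kˣ) : K) ^ e) d := hprim.pow hq2 (by rw [he, mul_comm])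
  have hset : ({x : K | x ^ d = 1} : Finset K) = Polynomial.nthRootsFinset d (1 : K) := by
    ext x
    simp [Polynomial.mem_nthRootsFinset hd (1 : K)]
  rw [hset, hprim2.card_nthRootsFinset]

omit hq in
lemma card_fiber [DecidableEq K] (a : K) (ha : a ≠ 0) :
    ({b : K | b ^ (q + 1) = a ^ (q + 1)} : Finset K).card = q + 1 := by
  have hdvd : q + 1 ∣ q ^ 2 - 1 := ⟨q - 1, by simpa using Nat.sq_sub_sq q 1⟩
  have key := card_roots_of_dvd (q := q) hF (d := q + 1) (by omega) hdvd
  have hbij : ({b : K | b ^ (q + 1) = a ^ (q + 1)} : Finset K).card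
      = ({x : K | x ^ (q + 1) = 1} : Finset K).card := by
    apply Finset.card_bij (fun b _ => b * a⁻¹)
    · intro b hb
      simp only [Finset.mem_filter, Finset.mem_univ, true_and] at hb ⊢
      rw [mul_pow, hb, inv_pow, mul_inv_cancel₀ (pow_ne_zero _ ha)]
    · intro b1 h1 b2 h2 h
      exact mul_right_cancel₀ (inv_ne_zero ha) h
    · intro u hu
      simp only [Finset.mem_filter, Finset.mem_univ, true_and] at hu
      refine ⟨u * a, ?_, by field_simp⟩
      simp only [Finset.mem_filter, Finset.mem_univ, true_and]
      rw [mul_pow, hu, one_mul]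
  rw [hbij, key]

lemma exists_pow_eq (c : K) (hc0 : c ≠ 0) (hc : c ^ (q - 1) = 1) :
    ∃ a : K, a ≠ 0 ∧ a ^ (q + 1) = c := by
  classical
  have hq2 : 2 ≤ q := hq.two_le
  obtain ⟨g, hg⟩ := IsCyclic.exists_generator (α := Kˣ)
  have horder : orderOf g = q ^ 2 - 1 := by
    rw [orderOf_eq_card_of_forall_mem_zpowers hg, Nat.card_eq_fintype_card,
      Fintype.card_units, hF]
  set u : Kˣ := Units.mk0 c hc0 with hu_def
  obtain ⟨t, ht0⟩ := mem_powers_iff_mem_zpowers.mpr (hg u)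
  have ht : g ^ t = u := ht0
  clear ht0
  have hu1 : u ^ (q - 1) = 1 := by
    apply Units.ext
    simp only [Units.val_pow_eq_pow_val, hu_def, Units.val_mk0, Units.val_one, hc]
  have hdvd1 : orderOf g ∣ t * (q - 1) := by
    apply orderOf_dvd_of_pow_eq_one
    rw [pow_mul, ht, hu1]
  rw [horder] at hdvd1
  have hfac : q ^ 2 - 1 = (q + 1) * (q - 1) := by
    simpa using Nat.sq_sub_sq q 1
  rw [hfac] at hdvd1
  have hdvd2 : q + 1 ∣ t := by
    have hpos : 0 < q - 1 := by omega
    exact (Nat.mul_dvd_mul_iff_right hpos).mp hdvd1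
  obtain ⟨s, rfl⟩ := hdvd2
  refine ⟨((g ^ s : Kˣ) : K), Units.ne_zero _, ?_⟩
  have : (g ^ s) ^ (q + 1) = u := by rw [← pow_mul, mul_comm s (q+1)]; exact ht
  calc ((g ^ s : Kˣ) : K) ^ (q + 1) = (((g ^ s) ^ (q + 1) : Kˣ) : K) := by push_cast; rfl
    _ = c := by rw [this]; rfl

lemma neg_one_pow_q : (-1 : K) ^ q = -1 := by
  rcases Nat.even_or_odd q with he | ho
  · obtain ⟨p, k, hp, hk, hqpk, hchar⟩ := charp_aux hq hF
    have h2p : (2 : ℕ) ∣ p := by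
      apply Nat.Prime.dvd_of_dvd_pow (n := k) Nat.prime_two
      rw [← hqpk]
      exact he.two_dvd
    have hp2 : 2 = p := (Nat.prime_dvd_prime_iff_eq Nat.prime_two hp).mp h2p
    subst hp2
    haveI := hchar
    have hn : (-1 : K) = 1 := CharTwo.neg_eq 1
    rw [hn, one_pow]
  · exact ho.neg_one_pow

lemma val_fixed_of_sum {ι : Type*} (s : Finset ι) (x : ι → K) (c : K)
    (h : ∑ i ∈ s, x i ^ (q + 1) = -c) : c ^ q = c := by
  have h2 : (∑ i ∈ s, x i ^ (q + 1)) ^ q = ∑ i ∈ s, x i ^ (q + 1) := by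
    rw [sum_pow_q hq hF]
    exact Finset.sum_congr rfl fun i _ => term_fixed hF (x i)
  rw [h] at h2
  have h3 : (-c) ^ q = -(c ^ q) := by
    rw [show (-c) = (-1) * c by ring, mul_pow, neg_one_pow_q hq hF, neg_one_mul]
  rw [h3] at h2
  exact neg_inj.mp h2

end basics

section count
variable (K q) [DecidableEq K]

/-- Affine solutions of `∑ xᵢ^{q+1} = c` in `K^m`. -/
def solSet (m : ℕ) (c : K) : Finset (Fin m → K) :=
  {x : Fin m → K | ∑ i, x i ^ (q + 1) = c}

variable {K q}

lemma mem_solSet {m : ℕ} {c : K} {x : Fin m → K} :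
    x ∈ solSet K q m c ↔ ∑ i, x i ^ (q + 1) = c := by
  simp [solSet]

lemma solSet_partition (hF : Fintype.card K = q ^ 2) (m : ℕ) :
    ∑ c : K, (solSet K q m c).card = q ^ (2 * m) := by
  have h := Finset.card_eq_sum_card_fiberwise
    (f := fun x : Fin m → K => ∑ i, x i ^ (q + 1)) (s := Finset.univ) (t := Finset.univ)
    (fun x _ => Finset.mem_univ _)
  rw [Finset.card_univ, Fintype.card_fun, Fintype.card_fin, hF, ← pow_mul] at h
  rw [h]
  apply Finset.sum_congr rfl
  intro c _
  rfl

lemma solSet_base : (solSet K q 1 (0 : K)).card = 1 := by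
  have hs : solSet K q 1 (0 : K) = {0} := by
    ext x
    simp only [mem_solSet, Fin.sum_univ_one, Finset.mem_singleton]
    constructor
    · intro h
      have hx0 : x 0 = 0 := (pow_eq_zero_iff (show q + 1 ≠ 0 by omega)).mp h
      funext i
      rw [Subsingleton.elim i 0]
      simpa using hx0
    · intro h
      rw [h]
      simpa using zero_pow (show q + 1 ≠ 0 by omega)
  rw [hs, Finset.card_singleton]

lemma solSet_succ (m : ℕ) :
    (solSet K q (m + 1) 0).card = ∑ a : K, (solSet K q m (- a ^ (q + 1))).card := by
  have h := Finset.card_eq_sum_card_fiberwise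
    (f := fun x : Fin (m + 1) → K => x 0) (s := solSet K q (m + 1) 0) (t := Finset.univ)
    (fun x _ => Finset.mem_univ _)
  rw [h]
  apply Finset.sum_congr rfl
  intro a _
  apply Finset.card_bij (fun x _ => Fin.tail x)
  · intro x hx
    simp only [Finset.mem_filter, mem_solSet] at hx
    rw [mem_solSet]
    obtain ⟨h1, h2⟩ := hx
    rw [Fin.sum_univ_succ, h2] at h1
    unfold Fin.tail
    linear_combination h1
  · intro x1 h1 x2 h2 hteq
    simp only [Finset.mem_filter] at h1 h2
    funext i
    rcases Fin.eq_zero_or_eq_succ i with rfl | ⟨j, rfl⟩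
    · rw [h1.2, h2.2]
    · exact congrFun hteq j
  · intro y hy
    rw [mem_solSet] at hy
    refine ⟨Fin.cons a y, ?_, ?_⟩
    · simp only [Finset.mem_filter, mem_solSet]
      constructor
      · rw [Fin.sum_univ_succ]
        simp only [Fin.cons_zero, Fin.cons_succ]
        rw [show (∑ i : Fin m, y i ^ (q + 1)) = -a ^ (q+1) from hy]
        ring
      · simp
    · simp

lemma solSet_rec (hq : IsPrimePow q) (hF : Fintype.card K = q ^ 2) (m : ℕ) :
    (solSet K q (m + 1) 0).card + (q + 1) * (solSet K q m 0).card
      = (solSet K q m 0).card + (q + 1) * q ^ (2 * m) := by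
  have hq2 : 2 ≤ q := hq.two_le
  set T : K → ℕ := fun c => (solSet K q m c).card with hT
  -- step 1 : recursion
  have hsucc : (solSet K q (m + 1) 0).card = ∑ a : K, T (- a ^ (q + 1)) := solSet_succ m
  -- step 2 : split off a = 0
  have hsplit : ∑ a : K, T (- a ^ (q + 1))
      = (∑ a ∈ Finset.univ.erase (0 : K), T (- a ^ (q + 1))) + T 0 := by
    have h := Finset.sum_erase_add Finset.univ (fun a : K => T (- a ^ (q + 1)))
      (Finset.mem_univ (0 : K))
    rw [← h]
    congr 1
    show T (- (0:K) ^ (q + 1)) = T 0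
    rw [zero_pow (show q + 1 ≠ 0 by omega), neg_zero]
  -- the image of the norm map
  set KS : Finset K := {c : K | c ≠ 0 ∧ c ^ (q - 1) = 1} with hKS
  have himg : (Finset.univ.erase (0 : K)).image (fun a : K => a ^ (q + 1)) = KS := by
    ext c
    simp only [Finset.mem_image, Finset.mem_erase, Finset.mem_univ, and_true, hKS,
      Finset.mem_filter, true_and]
    constructor
    · rintro ⟨a, ha, rfl⟩
      refine ⟨pow_ne_zero _ ha, ?_⟩
      rw [← pow_mul]
      have he : (q + 1) * (q - 1) = q ^ 2 - 1 := by simpa using (Nat.sq_sub_sq q 1).symm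
      rw [he, ← hF]
      exact FiniteField.pow_card_sub_one_eq_one a ha
    · rintro ⟨hc0, hc1⟩
      obtain ⟨a, ha, haeq⟩ := exists_pow_eq hq hF c hc0 hc1
      exact ⟨a, ha, haeq⟩
  -- step 3 : fiber the sum over the image
  have hfib : ∑ a ∈ Finset.univ.erase (0 : K), T (- a ^ (q + 1))
      = ∑ b ∈ KS, (q + 1) * T (- b) := by
    rw [← himg]
    rw [← Finset.sum_fiberwise_of_maps_to (f := fun a : K => T (- a ^ (q + 1)))
      (g := fun a : K => a ^ (q + 1))
      (t := (Finset.univ.erase (0 : K)).image (fun a : K => a ^ (q + 1)))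
      (fun x hx => Finset.mem_image_of_mem _ hx)]
    apply Finset.sum_congr rfl
    intro b hb
    obtain ⟨a0, ha0, rfl⟩ := Finset.mem_image.mp hb
    have ha0' : a0 ≠ 0 := (Finset.mem_erase.mp ha0).1
    have hcongr : ∀ x ∈ (Finset.univ.erase (0 : K)).filter
        (fun a => a ^ (q + 1) = a0 ^ (q + 1)), T (- x ^ (q + 1)) = T (- a0 ^ (q + 1)) := by
      intro x hx
      rw [(Finset.mem_filter.mp hx).2]
    rw [Finset.sum_congr rfl hcongr, Finset.sum_const, smul_eq_mul]
    congr 1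
    have hfe : (Finset.univ.erase (0 : K)).filter (fun a => a ^ (q + 1) = a0 ^ (q + 1))
        = ({b : K | b ^ (q + 1) = a0 ^ (q + 1)} : Finset K) := by
      ext b
      simp only [Finset.mem_filter, Finset.mem_erase, Finset.mem_univ, and_true, true_and]
      constructor
      · rintro ⟨_, h⟩; exact h
      · intro h
        refine ⟨fun hb0 => ?_, h⟩
        rw [hb0, zero_pow (show q + 1 ≠ 0 by omega)] at h
        exact pow_ne_zero _ ha0' h.symm
    rw [hfe, card_fiber hF a0 ha0']
  -- step 4 : extend the sum over KS to all nonzero b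
  have hext : ∑ b ∈ KS, T (- b) = ∑ b ∈ Finset.univ.erase (0 : K), T (- b) := by
    apply Finset.sum_subset
    · intro c hc
      simp only [hKS, Finset.mem_filter] at hc
      exact Finset.mem_erase.mpr ⟨hc.2.1, Finset.mem_univ c⟩
    · intro c hc hcK
      simp only [hKS, Finset.mem_filter, Finset.mem_univ, true_and] at hcK
      have hc0 : c ≠ 0 := (Finset.mem_erase.mp hc).1
      have hc1 : c ^ (q - 1) ≠ 1 := fun h => hcK ⟨hc0, h⟩
      rw [hT]
      simp only
      rw [Finset.card_eq_zero]
      rw [Finset.eq_empty_iff_forall_notMem]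
      intro x hx
      rw [mem_solSet] at hx
      have := val_fixed_of_sum hq hF Finset.univ x c hx
      apply hc1
      have hq1 : q - 1 + 1 = q := by omega
      have : c ^ (q - 1) * c = 1 * c := by
        rw [one_mul, ← pow_succ, hq1, this]
      exact mul_right_cancel₀ hc0 this
  -- step 5 : re-index by negation
  have hneg : ∑ b ∈ Finset.univ.erase (0 : K), T (- b)
      = ∑ c ∈ Finset.univ.erase (0 : K), T c := by
    apply Finset.sum_nbij' (i := fun b => -b) (j := fun c => -c)
    · intro b hb
      simp only [Finset.mem_erase, Finset.mem_univ, and_true] at hb ⊢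
      exact neg_ne_zero.mpr hb
    · intro c hc
      simp only [Finset.mem_erase, Finset.mem_univ, and_true] at hc ⊢
      exact neg_ne_zero.mpr hc
    · intro b _; simp
    · intro c _; simp
    · intro b _; rfl
  -- step 6 : the partition
  have hpart : (∑ c ∈ Finset.univ.erase (0 : K), T c) + T 0 = q ^ (2 * m) := by
    rw [Finset.sum_erase_add Finset.univ _ (Finset.mem_univ 0)]
    exact solSet_partition hF m
  rw [hsucc, hsplit, hfib, ← Finset.mul_sum, hext, hneg]
  rw [← hpart]
  ring

lemma solSet_closed (hq : IsPrimePow q) (hF : Fintype.card K = q ^ 2) (m : ℕ) :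
    ((solSet K q (m + 1) 0).card : ℤ)
      = (q : ℤ) ^ (2 * m + 1) + ((q : ℤ) - 1) * (-1) ^ (m + 1) * (q : ℤ) ^ m := by
  induction m with
  | zero =>
    rw [solSet_base]
    push_cast
    ring
  | succ m IH =>
    have hrec := solSet_rec hq hF (m + 1)
    have hreci : ((solSet K q (m + 1 + 1) 0).card : ℤ)
        + ((q : ℤ) + 1) * ((solSet K q (m + 1) 0).card : ℤ)
        = ((solSet K q (m + 1) 0).card : ℤ) + ((q : ℤ) + 1) * (q : ℤ) ^ (2 * (m + 1)) := by
      exact_mod_cast hrec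
    linear_combination hreci - (q : ℤ) * IH

end count

end HermAux


open Finset in
lemma herm_card_key {q : ℕ} (hq : IsPrimePow q) (hF : Fintype.card F = q ^ 2) (n : ℕ) :
    ((q : ℤ) ^ 2 - 1) * (Nat.card ↥(Herm F q n)) + 1
      = (q : ℤ) ^ (2 * n + 1) + ((q : ℤ) - 1) * (-1) ^ (n + 1) * (q : ℤ) ^ n := by
  classical
  have hq2 : 2 ≤ q := hq.two_le
  haveI : Finite (PG F n) := Quotient.finite _
  haveI : Fintype (PG F n) := Fintype.ofFinite _
  set hermF : Finset (PG F n) := {p : PG F n | p ∈ Herm F q n} with hhermF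
  have hone : (fun _ => (1 : F) : Fin (n + 1) → F) ≠ 0 := fun h => one_ne_zero (congrFun h 0)
  set f : (Fin (n + 1) → F) → PG F n :=
    fun x => if hx : x = 0 then Projectivization.mk F (fun _ => (1 : F)) hone
             else Projectivization.mk F x hx with hf
  set SStar := (solSet F q (n + 1) (0 : F)).erase 0 with hSSdef
  -- membership criterion for Herm via a representative
  have hmemHerm : ∀ (x : Fin (n + 1) → F) (hx : x ≠ 0),
      (Projectivization.mk F x hx ∈ Herm F q n ↔ ∑ i, x i ^ (q + 1) = 0) := by
    intro x hx
    obtain ⟨a, ha⟩ := Projectivization.exists_smul_eq_mk_rep F x hx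
    have hrep : ∀ i, (Projectivization.mk F x hx).rep i = (a : F) * x i := by
      intro i; rw [← ha]; rfl
    show (∑ i, (Projectivization.mk F x hx).rep i ^ (q + 1) = 0) ↔ _
    rw [show ∑ i, (Projectivization.mk F x hx).rep i ^ (q + 1)
        = (a : F) ^ (q + 1) * ∑ i, x i ^ (q + 1) from by
      rw [Finset.mul_sum]; exact Finset.sum_congr rfl fun i _ => by rw [hrep i]; ring]
    constructor
    · intro h
      rcases mul_eq_zero.mp h with h | h
      · exact absurd h (pow_ne_zero _ (Units.ne_zero a))
      · exact h
    · intro h; rw [h, mul_zero]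
  have hmapsto : ∀ x ∈ SStar, f x ∈ hermF := by
    intro x hx
    obtain ⟨hx0, hxs⟩ := Finset.mem_erase.mp hx
    rw [hf]
    simp only [dif_neg hx0]
    simp only [hhermF, Finset.mem_filter, Finset.mem_univ, true_and]
    exact (hmemHerm x hx0).mpr (mem_solSet.mp hxs)
  have hcount := Finset.card_eq_sum_card_fiberwise (f := f) (s := SStar) (t := hermF) hmapsto
  have hfiber : ∀ p ∈ hermF, (SStar.filter (fun x => f x = p)).card = q ^ 2 - 1 := by
    intro p hp
    have hpH : ∑ i, p.rep i ^ (q + 1) = 0 := by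
      simp only [hhermF, Finset.mem_filter, Finset.mem_univ, true_and] at hp; exact hp
    rw [← hF, ← Fintype.card_units (α := F), ← Finset.card_univ]
    symm
    apply Finset.card_bij (fun (u : Fˣ) _ => (u : F) • Projectivization.rep p)
    · intro u _
      have hne : (u : F) • p.rep ≠ 0 := smul_ne_zero (Units.ne_zero u) p.rep_nonzero
      rw [Finset.mem_filter, hSSdef, Finset.mem_erase]
      refine ⟨⟨hne, ?_⟩, ?_⟩
      · rw [mem_solSet]
        rw [show ∑ i, ((u : F) • p.rep) i ^ (q + 1)
            = (u : F) ^ (q + 1) * ∑ i, p.rep i ^ (q + 1) from by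
          rw [Finset.mul_sum]
          exact Finset.sum_congr rfl fun i _ => by
            rw [Pi.smul_apply, smul_eq_mul]; ring]
        rw [hpH, mul_zero]
      · rw [hf]
        simp only [dif_neg hne]
        conv_rhs => rw [← Projectivization.mk_rep p]
        apply (Projectivization.mk_eq_mk_iff F _ _ hne p.rep_nonzero).mpr
        exact ⟨u, rfl⟩
    · intro u1 _ u2 _ h
      obtain ⟨j, hj⟩ := Function.ne_iff.mp p.rep_nonzero
      have hj' : p.rep j ≠ 0 := by simpa using hj
      have := congrFun h j
      simp only [Pi.smul_apply, smul_eq_mul] at this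
      exact Units.ext (mul_right_cancel₀ hj' this)
    · intro x hx
      rw [Finset.mem_filter] at hx
      obtain ⟨hxS, hxf⟩ := hx
      have hx0 : x ≠ 0 := (Finset.mem_erase.mp hxS).1
      rw [hf] at hxf
      simp only [dif_neg hx0] at hxf
      conv_rhs at hxf => rw [← Projectivization.mk_rep p]
      obtain ⟨a, ha⟩ := (Projectivization.mk_eq_mk_iff F _ _ hx0 p.rep_nonzero).mp hxf
      exact ⟨a, Finset.mem_univ a, ha⟩
  rw [Finset.sum_congr rfl hfiber, Finset.sum_const, smul_eq_mul] at hcount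
  have h0mem : (0 : Fin (n + 1) → F) ∈ solSet F q (n + 1) (0 : F) := by
    rw [mem_solSet]
    apply Finset.sum_eq_zero
    intro i _
    exact zero_pow (show q + 1 ≠ 0 by omega)
  have hSScard : (solSet F q (n + 1) (0 : F)).card = SStar.card + 1 := by
    rw [hSSdef, Finset.card_erase_of_mem h0mem]
    have : 1 ≤ (solSet F q (n + 1) (0 : F)).card :=
      Finset.card_pos.mpr ⟨0, h0mem⟩
    omega
  have hcardh : hermF.card = Nat.card ↥(Herm F q n) := by
    haveI : Fintype ↥(Herm F q n) := Fintype.ofFinite _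
    rw [Nat.card_coe_set_eq, Set.ncard_eq_toFinset_card' (Herm F q n)]
    congr 1
    ext p
    simp [hhermF, Set.mem_toFinset]
  have hfin : ((solSet F q (n + 1) (0 : F)).card : ℤ)
      = ((q : ℤ) ^ 2 - 1) * (Nat.card ↥(Herm F q n)) + 1 := by
    rw [hSScard, hcount, hcardh]
    have h1q : 1 ≤ q ^ 2 := by nlinarith
    push_cast [Nat.cast_sub h1q]
    ring
  rw [← hfin, solSet_closed hq hF n]

/-- The Hermitian variety `H(n,q^2)` has exactly
`(q^{n+1} + (-1)^n)(q^n - (-1)^n)/(q^2 - 1)` points; in particular the Hermitian curve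
`H(2,q^2)` has exactly `q^3 + 1` points. -/
theorem herm_card (q n : ℕ) (hq : IsPrimePow q) (hn : 2 ≤ n)
    (hF : Fintype.card F = q ^ 2) :
    (Nat.card ↥(Herm F q n) : ℤ) =
      ((q : ℤ) ^ (n + 1) + (-1 : ℤ) ^ n) * ((q : ℤ) ^ n - (-1 : ℤ) ^ n)
        / ((q : ℤ) ^ 2 - 1) ∧
    Nat.card ↥(Herm F q 2) = q ^ 3 + 1 := by
  have hq2 : (2 : ℤ) ≤ (q : ℤ) := by exact_mod_cast hq.two_le
  have hne : ((q : ℤ) ^ 2 - 1) ≠ 0 := by nlinarith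
  constructor
  · have hkey := herm_card_key F hq hF n
    have he : ((-1 : ℤ) ^ n) * ((-1 : ℤ) ^ n) = 1 := by
      rw [← pow_add]
      exact Even.neg_one_pow ⟨n, by ring⟩
    have hnum : ((q : ℤ) ^ (n + 1) + (-1 : ℤ) ^ n) * ((q : ℤ) ^ n - (-1 : ℤ) ^ n)
        = ((q : ℤ) ^ 2 - 1) * (Nat.card ↥(Herm F q n)) := by
      have hps : ((-1 : ℤ) ^ (n + 1)) = -((-1 : ℤ) ^ n) := by rw [pow_succ]; ring
      rw [hps] at hkey
      have h2n : ((q : ℤ)) ^ (2 * n + 1) = ((q : ℤ) ^ n) ^ 2 * q := by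
        rw [← pow_mul]; ring
      rw [h2n] at hkey
      have hn1 : ((q : ℤ)) ^ (n + 1) = (q : ℤ) ^ n * q := by ring
      rw [hn1]
      linear_combination -hkey - he
    rw [hnum, Int.mul_ediv_cancel_left _ hne]
  · have hkey2 := herm_card_key F hq hF 2
    have hcan : ((q : ℤ) ^ 2 - 1) * (Nat.card ↥(Herm F q 2))
        = ((q : ℤ) ^ 2 - 1) * ((q : ℤ) ^ 3 + 1) := by
      norm_num at hkey2
      rw [Nat.card_coe_set_eq]
      linear_combination hkey2
    have := mul_left_cancel₀ hne hcan
    exact_mod_cast this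
end

section
/- Let q be a prime power. Every line of PG(2,q^2) meets the Hermitian curve H(2,q^2) in exactly 1 or exactly q+1 points; in particular H(2,q^2) contains no line of PG(2,q^2). -/
open Projectivization
open scoped LinearAlgebra.Projectivization

variable (F : Type) [Field F] [Fintype F]

set_option maxHeartbeats 1600000
set_option linter.unusedSectionVars false

section AuxCounting
open Polynomial
variable {F}

lemma ncard_roots_le (P : F[X]) (hP : P ≠ 0) :
    {x : F | P.eval x = 0}.ncard ≤ P.natDegree := by
  classical
  have h : {x : F | P.eval x = 0} = ↑P.roots.toFinset := by
    ext x; simp [Polynomial.mem_roots, hP, Polynomial.IsRoot]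
  rw [h, Set.ncard_coe_finset]
  exact le_trans (Multiset.toFinset_card_le _) (Polynomial.card_roots' P)

section
variable {q : ℕ} (hq2 : 2 ≤ q) (hfrob : ∀ x y : F, (x + y)^q = x^q + y^q)
  (hcard : Fintype.card F = q^2)

include hcard in
lemma pow_qq (x : F) : (x^q)^q = x := by
  rw [← pow_mul, ← sq, ← hcard, FiniteField.pow_card]

include hfrob in
lemma frob_sub (x y : F) : (x - y)^q = x^q - y^q := by
  have h := hfrob (x - y) y
  rw [sub_add_cancel] at h
  linear_combination -h

include hq2 in
lemma card_fixed_le : {x : F | x^q = x}.ncard ≤ q := by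
  have h0 : ((X:F[X])^q - X) ≠ 0 := by
    intro h
    have := congrArg (fun P => Polynomial.coeff P q) h
    simp [Polynomial.coeff_X, (show ¬ (1 = q) by omega)] at this
  have h1 : {x : F | x^q = x} = {x : F | ((X:F[X])^q - X).eval x = 0} := by
    ext x; simp [sub_eq_zero]
  have h2 : ((X:F[X])^q - X).natDegree ≤ q := by
    refine le_trans (Polynomial.natDegree_sub_le _ _) ?_
    simp; omega
  exact h1 ▸ le_trans (ncard_roots_le _ h0) h2

include hq2 in
lemma card_trker_le : {x : F | x + x^q = 0}.ncard ≤ q := by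
  have h0 : ((X:F[X])^q + X) ≠ 0 := by
    intro h
    have := congrArg (fun P => Polynomial.coeff P q) h
    simp [Polynomial.coeff_X, (show ¬ (1 = q) by omega)] at this
  have h1 : {x : F | x + x^q = 0} = {x : F | ((X:F[X])^q + X).eval x = 0} := by
    ext x; simp; constructor <;> intro h <;> linear_combination h
  have h2 : ((X:F[X])^q + X).natDegree ≤ q := by
    refine le_trans (Polynomial.natDegree_add_le _ _) ?_
    simp; omega
  exact h1 ▸ le_trans (ncard_roots_le _ h0) h2

lemma card_pow_eq_le (c : F) : {x : F | x^(q+1) = c}.ncard ≤ q + 1 := by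
  have h0 : ((X:F[X])^(q+1) - C c) ≠ 0 := by
    intro h
    have := congrArg (fun P => Polynomial.coeff P (q+1)) h
    simp [Polynomial.coeff_C, (show ¬ (q + 1 = 0) by omega)] at this
  have h1 : {x : F | x^(q+1) = c} = {x : F | ((X:F[X])^(q+1) - C c).eval x = 0} := by
    ext x; simp [sub_eq_zero]
  have h2 : ((X:F[X])^(q+1) - C c).natDegree ≤ q + 1 := by
    refine le_trans (Polynomial.natDegree_sub_le _ _) ?_
    simp
  exact h1 ▸ le_trans (ncard_roots_le _ h0) h2

end

end AuxCounting

section AuxQ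
variable {F} {q : ℕ}

lemma trace_count (hq2 : 2 ≤ q) (hfrob : ∀ x y : F, (x + y)^q = x^q + y^q)
    (hcard : Fintype.card F = q^2) (d : F) (hd : d^q = d) :
    {u : F | u + u^q = d}.ncard = q := by
  classical
  set T : F →+ F := AddMonoidHom.mk' (fun x => x + x^q)
    (by intro a b; show (a+b) + (a+b)^q = (a + a^q) + (b + b^q); rw [hfrob]; ring) with hT
  have hTapp : ∀ x : F, T x = x + x^q := fun x => rfl
  have hkerset : ((T.ker : Set F)) = {u : F | u + u^q = 0} := by
    ext u; simp [AddMonoidHom.mem_ker, hTapp]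
  have hker_card : Nat.card T.ker = {u : F | u + u^q = 0}.ncard := by
    rw [← Nat.card_coe_set_eq]
    exact Nat.card_congr (Equiv.setCongr hkerset)
  have hker_le : Nat.card T.ker ≤ q := hker_card ▸ card_trker_le hq2
  have hrsub : (T.range : Set F) ⊆ {x : F | x^q = x} := by
    rintro x ⟨u, rfl⟩
    have h : (u + u^q)^q = u^q + u := by
      rw [hfrob, pow_qq hcard]
    simp only [Set.mem_setOf_eq, hTapp]
    rw [h]; ring
  have hrange_le : Nat.card T.range ≤ q := by
    calc Nat.card T.range = (T.range : Set F).ncard := Nat.card_coe_set_eq _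
    _ ≤ {x : F | x^q = x}.ncard := Set.ncard_le_ncard hrsub (Set.toFinite _)
    _ ≤ q := card_fixed_le hq2
  have hprod : q^2 = Nat.card T.range * Nat.card T.ker := by
    have h1 := AddSubgroup.card_eq_card_quotient_mul_card_addSubgroup T.ker
    have h2 : Nat.card (F ⧸ T.ker) = Nat.card T.range :=
      Nat.card_congr (QuotientAddGroup.quotientKerEquivRange T).toEquiv
    rw [← hcard, Nat.card_eq_fintype_card.symm, h1, h2]
  have hkq : Nat.card T.ker = q ∧ Nat.card T.range = q := by
    constructor <;> nlinarith [hker_le, hrange_le, hprod]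
  have hrange_eq : (T.range : Set F) = {x : F | x^q = x} := by
    apply Set.eq_of_subset_of_ncard_le hrsub
    rw [← Nat.card_coe_set_eq, Nat.card_coe_set_eq, ← Nat.card_coe_set_eq]
    calc {x : F | x^q = x}.ncard ≤ q := card_fixed_le hq2
    _ = Nat.card T.range := hkq.2.symm
    _ = (T.range : Set F).ncard := Nat.card_coe_set_eq _
  have hd' : d ∈ (T.range : Set F) := by rw [hrange_eq]; exact hd
  obtain ⟨u₀, hu₀⟩ := hd'
  have hu₀' : u₀ + u₀^q = d := hu₀
  have hsetEq : {u : F | u + u^q = d} = (fun k => u₀ + k) '' {u : F | u + u^q = 0} := by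
    ext u
    simp only [Set.mem_setOf_eq, Set.mem_image]
    constructor
    · intro h
      refine ⟨u - u₀, ?_, by ring⟩
      rw [frob_sub hfrob u u₀]
      linear_combination h - hu₀'
    · rintro ⟨k, hk, rfl⟩
      rw [hfrob u₀ k]
      linear_combination hk + hu₀'
  rw [hsetEq, Set.ncard_image_of_injective _ (add_right_injective u₀), ← hker_card]
  exact hkq.1

lemma norm_count (hq2 : 2 ≤ q) (hcard : Fintype.card F = q^2)
    (c : F) (hc : c ≠ 0) (hcq : c^q = c) :
    {y : F | y^(q+1) = c}.ncard = q + 1 := by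
  classical
  set N : Fˣ →* Fˣ := MonoidHom.mk' (fun x => x^(q+1)) (fun a b => mul_pow a b (q+1)) with hN
  have hNapp : ∀ x : Fˣ, N x = x^(q+1) := fun x => rfl
  have hval : ∀ x : Fˣ, ((N x : Fˣ) : F) = (x:F)^(q+1) := fun x => Units.val_pow_eq_pow_val x (q+1)
  have hfix : ∀ x : Fˣ, ((x:F)^(q+1))^q = (x:F)^(q+1) := by
    intro x
    rw [pow_succ, mul_pow, pow_qq hcard, mul_comm]
  -- kernel set in F
  have hkermap : Function.Injective
      (fun x : N.ker => (⟨(x : Fˣ), by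
        have hx : N x = 1 := x.2
        have := congrArg (fun u : Fˣ => (u : F)) hx
        simpa [hval] using this⟩ : {y : F | y^(q+1) = 1})) := by
    intro x y h
    ext
    exact congrArg Subtype.val h
  have hker_le : Nat.card N.ker ≤ q + 1 := by
    have h1 := Nat.card_le_card_of_injective _ hkermap
    rw [Nat.card_coe_set_eq] at h1
    exact le_trans h1 (card_pow_eq_le (1:F))
  -- range bound
  have Kx : Set F := {y : F | y^q = y ∧ y ≠ 0}
  have hKx_le : {y : F | y^q = y ∧ y ≠ 0}.ncard ≤ q - 1 := by
    have hsub : {y : F | y^q = y ∧ y ≠ 0} = {y : F | y^q = y} \ {0} := by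
      ext y; simp [and_comm]
    have h0 : (0:F) ∈ {y : F | y^q = y} := by
      simp [zero_pow (show q ≠ 0 by omega)]
    rw [hsub, Set.ncard_diff_singleton_of_mem h0]
    exact Nat.sub_le_sub_right (card_fixed_le hq2) 1
  have hrmap : ∀ x : N.range, ((x : Fˣ) : F) ∈ {y : F | y^q = y ∧ y ≠ 0} := by
    rintro ⟨x, u, rfl⟩
    exact ⟨by rw [hval]; exact hfix u, Units.ne_zero _⟩
  have hrinj : Function.Injective
      (fun x : N.range => (⟨(x : Fˣ), hrmap x⟩ : {y : F | y^q = y ∧ y ≠ 0})) := by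
    intro x y h
    ext
    exact congrArg Subtype.val h
  have hrange_le : Nat.card N.range ≤ q - 1 := by
    have h1 := Nat.card_le_card_of_injective _ hrinj
    rw [Nat.card_coe_set_eq] at h1
    exact le_trans h1 hKx_le
  have hcardu : Nat.card Fˣ = q^2 - 1 := by
    rw [Nat.card_eq_fintype_card, Fintype.card_units, hcard]
  have hprod : q^2 - 1 = Nat.card N.range * Nat.card N.ker := by
    have h1 := Subgroup.card_eq_card_quotient_mul_card_subgroup N.ker
    have h2 : Nat.card (Fˣ ⧸ N.ker) = Nat.card N.range :=
      Nat.card_congr (QuotientGroup.quotientKerEquivRange N).toEquiv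
    rw [← hcardu, h1, h2]
  obtain ⟨a, rfl⟩ : ∃ a, q = a + 2 := ⟨q - 2, by omega⟩
  have hq2' : (a+2)^2 - 1 = (a+1) * (a+3) := by ring_nf; omega
  have hkq : Nat.card N.ker = a + 3 ∧ Nat.card N.range = a + 1 := by
    rw [hq2'] at hprod
    have hrle : Nat.card N.range ≤ a + 1 := by simpa using hrange_le
    have hkle : Nat.card N.ker ≤ a + 3 := by simpa using hker_le
    have h1 : Nat.card N.range * Nat.card N.ker ≤ (a+1) * Nat.card N.ker :=
      Nat.mul_le_mul_right _ hrle
    have h2 : (a+1) * Nat.card N.ker ≤ (a+1) * (a+3) := Nat.mul_le_mul_left _ hkle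
    have hke : Nat.card N.ker = a + 3 := by nlinarith
    refine ⟨hke, ?_⟩
    rw [hke] at hprod
    have := hprod.symm
    nlinarith
  -- range set equals Kx
  have hS1 : (Units.val '' ((N.range : Set Fˣ))) = {y : F | y^(a+2) = y ∧ y ≠ 0} := by
    apply Set.eq_of_subset_of_ncard_le
    · rintro y ⟨x, hx, rfl⟩
      exact hrmap ⟨x, hx⟩
    · have himg : (Units.val '' ((N.range : Set Fˣ))).ncard = (N.range : Set Fˣ).ncard :=
        Set.ncard_image_of_injective _ Units.val_injective
      rw [himg, ← Nat.card_coe_set_eq]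
      calc {y : F | y^(a+2) = y ∧ y ≠ 0}.ncard ≤ a + 1 := by simpa using hKx_le
      _ = Nat.card N.range := hkq.2.symm
      _ = Nat.card (N.range : Set Fˣ) := rfl
    · exact Set.toFinite _
  -- get preimage of c
  have hcmem : c ∈ {y : F | y^(a+2) = y ∧ y ≠ 0} := ⟨hcq, hc⟩
  rw [← hS1] at hcmem
  obtain ⟨xc, hxcr, hxcv⟩ := hcmem
  obtain ⟨x₀, hx₀⟩ := hxcr
  -- the fiber in F
  have hfib : {y : F | y^(a+2+1) = c} = Units.val '' ((fun k => x₀ * k) '' (N.ker : Set Fˣ)) := by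
    ext y
    simp only [Set.mem_setOf_eq, Set.mem_image]
    constructor
    · intro hy
      have hy0 : y ≠ 0 := by
        intro h; rw [h] at hy; exact hc (by rw [← hy]; simp [zero_pow])
      refine ⟨Units.mk0 y hy0, ⟨x₀⁻¹ * Units.mk0 y hy0, ?_, by group⟩, rfl⟩
      show N _ = 1
      rw [map_mul, map_inv, hx₀]
      have : N (Units.mk0 y hy0) = xc := by
        apply Units.ext
        rw [hval, hxcv]
        exact hy
      rw [this, inv_mul_cancel]
    · rintro ⟨x, ⟨k, hk, rfl⟩, rfl⟩
      have hkk : N k = 1 := hk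
      have : N (x₀ * k) = xc := by rw [map_mul, hx₀, hkk, mul_one]
      have := congrArg Units.val this
      rw [hval, hxcv] at this
      exact this
  rw [hfib, Set.ncard_image_of_injective _ Units.val_injective,
    Set.ncard_image_of_injective _ (mul_right_injective x₀),
    ← Nat.card_coe_set_eq]
  have : Nat.card (N.ker : Set Fˣ) = Nat.card N.ker := rfl
  rw [this, hkq.1]

lemma no_full_line (hq2 : 2 ≤ q) (hfrob : ∀ x y : F, (x + y)^q = x^q + y^q)
    (hcard : Fintype.card F = q^2) (a b : Fin 3 → F)
    (hpair : ∀ s t : F, s • a + t • b = 0 → s = 0 ∧ t = 0)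
    (h1 : ∑ i, a i ^ (q+1) = 0) (h2 : ∑ i, a i * b i ^ q = 0)
    (h3 : ∑ i, a i ^ q * b i = 0) (h4 : ∑ i, b i ^ (q+1) = 0) : False := by
  classical
  have hqz : q ≠ 0 := by omega
  -- Frobenius is surjective
  have hfinj : Function.Injective (fun x : F => x^q) := by
    intro x y h
    have : (x - y)^q = 0 := by rw [frob_sub hfrob]; simp only at h; rw [h]; ring
    have := pow_eq_zero_iff hqz |>.mp this
    exact sub_eq_zero.mp this
  have hfsurj : Function.Surjective (fun x : F => x^q) :=
    Finite.surjective_of_injective hfinj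
  set u : Fin 3 → F := fun i => a i ^ q with hu
  set v : Fin 3 → F := fun i => b i ^ q with hv
  -- u v independent
  have hpair' : ∀ s t : F, s • u + t • v = 0 → s = 0 ∧ t = 0 := by
    intro s t hst
    obtain ⟨s', hs'⟩ := hfsurj s
    obtain ⟨t', ht'⟩ := hfsurj t
    simp only at hs' ht'
    have hzero : ∀ i, s' * a i + t' * b i = 0 := by
      intro i
      have hi : s * u i + t * v i = 0 := congrFun hst i
      have : (s' * a i + t' * b i)^q = 0 := by
        rw [hfrob, mul_pow, mul_pow, hs', ht']
        exact hi
      exact pow_eq_zero_iff hqz |>.mp this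
    have : s' • a + t' • b = 0 := by
      funext i
      simpa using hzero i
    obtain ⟨hs0, ht0⟩ := hpair s' t' this
    constructor
    · rw [← hs', hs0]; exact zero_pow hqz
    · rw [← ht', ht0]; exact zero_pow hqz
  -- the matrix
  set M : Matrix (Fin 2) (Fin 3) F := Matrix.of ![u, v] with hM
  have hain : a ∈ LinearMap.ker M.mulVecLin := by
    rw [LinearMap.mem_ker]
    funext j
    fin_cases j <;> simp [Matrix.mulVecLin_apply, Matrix.mulVec, dotProduct, hM, hu, hv]
    · rw [← h1]
      exact Finset.sum_congr rfl fun i _ => (pow_succ _ _).symm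
    · rw [← h2]
      exact Finset.sum_congr rfl fun i _ => mul_comm _ _
  have hbin : b ∈ LinearMap.ker M.mulVecLin := by
    rw [LinearMap.mem_ker]
    funext j
    fin_cases j <;> simp [Matrix.mulVecLin_apply, Matrix.mulVec, dotProduct, hM, hu, hv]
    · exact h3
    · rw [← h4]
      exact Finset.sum_congr rfl fun i _ => (pow_succ _ _).symm
  have hker : Submodule.span F (Set.range ![a, b]) ≤ LinearMap.ker M.mulVecLin := by
    rw [Submodule.span_le]
    rintro x ⟨i, rfl⟩
    fin_cases i
    · exact hain
    · exact hbin
  have hli : LinearIndependent F ![a, b] := LinearIndependent.pair_iff.mpr hpair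
  have hspan2 : Module.finrank F (Submodule.span F (Set.range ![a, b])) = 2 := by
    rw [finrank_span_eq_card hli]; simp
  have hker2 : 2 ≤ Module.finrank F (LinearMap.ker M.mulVecLin) := by
    exact hspan2.symm.trans_le (Submodule.finrank_mono hker)
  have hrk : Module.finrank F (LinearMap.range M.mulVecLin) ≤ 1 := by
    have h := LinearMap.finrank_range_add_finrank_ker M.mulVecLin
    rw [Module.finrank_pi F] at h
    simp only [Fintype.card_fin] at h
    omega
  have hMle : M.rank ≤ 1 := hrk
  have hTker : LinearMap.ker (M.transpose.mulVecLin) = ⊥ := by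
    refine (Submodule.eq_bot_iff _).mpr fun y hy => ?_
    rw [LinearMap.mem_ker] at hy
    have hcomp : y 0 • u + y 1 • v = 0 := by
      funext i
      have hi := congrFun hy i
      simp [Matrix.mulVecLin_apply, Matrix.mulVec, dotProduct, Fin.sum_univ_two,
        Matrix.transpose_apply, Matrix.vecHead, Matrix.vecTail, hM] at hi
      simp only [Pi.add_apply, Pi.smul_apply, smul_eq_mul, Pi.zero_apply]
      linear_combination hi
    obtain ⟨h0, h1'⟩ := hpair' _ _ hcomp
    funext j; fin_cases j <;> simp [h0, h1']
  have hT2 : 2 ≤ M.transpose.rank := by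
    show 2 ≤ Module.finrank F (LinearMap.range M.transpose.mulVecLin)
    have h := LinearMap.finrank_range_add_finrank_ker M.transpose.mulVecLin
    rw [hTker, finrank_bot, Module.finrank_pi F] at h
    simp only [Fintype.card_fin] at h
    omega
  have hTrank := Matrix.rank_transpose M
  omega

end AuxQ

section Key
variable {F} {q : ℕ}

lemma key (hq2 : 2 ≤ q) (hfrob : ∀ x y : F, (x + y)^q = x^q + y^q)
    (hcard : Fintype.card F = q^2)
    (W : Submodule F (Fin 3 → F)) (hW : Module.finrank F W = 2) :
    ((lineSet F 2 W ∩ Herm F q 2).ncard = 1 ∨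
      (lineSet F 2 W ∩ Herm F q 2).ncard = q + 1) ∧
    (lineSet F 2 W).ncard = q^2 + 1 := by
  classical
  haveI : Finite (PG F 2) := Quotient.finite _
  have hqz : q ≠ 0 := by omega
  -- basis of W
  let B := Module.finBasisOfFinrankEq F W hW
  set a : Fin 3 → F := (B 0 : Fin 3 → F) with ha_def
  set b : Fin 3 → F := (B 1 : Fin 3 → F) with hb_def
  have hli : LinearIndependent F ![a, b] := by
    have h1 := B.linearIndependent
    have h2 := h1.map' W.subtype W.ker_subtype
    have : (W.subtype ∘ B) = ![a, b] := by
      funext i; fin_cases i <;> rfl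
    rwa [← this]
  have hpair : ∀ s t : F, s • a + t • b = 0 → s = 0 ∧ t = 0 :=
    LinearIndependent.pair_iff.mp hli
  have ha : a ≠ 0 := by
    intro h
    have := hpair 1 0 (by simp [h])
    simp at this
  have hxb : ∀ x : F, x • a + b ≠ 0 := by
    intro x h
    have := hpair x 1 (by simpa using h)
    simp at this
  -- membership in W
  have hmemW : ∀ w : Fin 3 → F, w ∈ W ↔ ∃ s t : F, s • a + t • b = w := by
    intro w
    have hspan : Submodule.span F {a, b} = W := by
      have h1 : Submodule.map W.subtype ⊤ = W := Submodule.map_subtype_top W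
      rw [← B.span_eq, Submodule.map_span] at h1
      have h2 : W.subtype '' Set.range B = {a, b} := by
        rw [← Set.range_comp]
        ext x
        constructor
        · rintro ⟨i, rfl⟩; fin_cases i
          · exact Or.inl rfl
          · exact Or.inr rfl
        · rintro (rfl | rfl)
          · exact ⟨0, rfl⟩
          · exact ⟨1, rfl⟩
      rwa [h2] at h1
    rw [← hspan]
    exact Submodule.mem_span_pair
  -- parametrization
  set e : F → PG F 2 := fun x => Projectivization.mk F (x • a + b) (hxb x) with he_def
  set pa : PG F 2 := Projectivization.mk F a ha with hpa_def
  have hline_mem : ∀ p : PG F 2, p ∈ lineSet F 2 W ↔ p.rep ∈ W := by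
    intro p
    show p.submodule ≤ W ↔ _
    conv_lhs => rw [← Projectivization.mk_rep p]
    rw [Projectivization.submodule_mk, Submodule.span_singleton_le_iff_mem]
  have hline : lineSet F 2 W = insert pa (Set.range e) := by
    ext p
    rw [Set.mem_insert_iff, Set.mem_range, hline_mem, hmemW]
    constructor
    · rintro ⟨s, t, hst⟩
      by_cases ht : t = 0
      · left
        subst ht
        have hs : s ≠ 0 := by
          intro h
          exact p.rep_nonzero (by rw [← hst, h]; simp)
        rw [← Projectivization.mk_rep p, hpa_def]
        rw [Projectivization.mk_eq_mk_iff]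
        exact ⟨Units.mk0 s hs, by simp [Units.smul_def, ← hst]⟩
      · right
        refine ⟨t⁻¹ * s, ?_⟩
        rw [he_def, ← Projectivization.mk_rep p, Projectivization.mk_eq_mk_iff]
        refine ⟨Units.mk0 t⁻¹ (inv_ne_zero ht), ?_⟩
        rw [Units.smul_def, ← hst]
        simp [Units.val_mk0, smul_add, smul_smul]
        rw [inv_mul_cancel₀ ht, one_smul]
    · rintro (rfl | ⟨x, rfl⟩)
      · obtain ⟨c, hc⟩ := (Projectivization.mk_eq_mk_iff F _ _ _ ha).mp
          (Projectivization.mk_rep pa)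
        exact ⟨(c : F), 0, by simpa [Units.smul_def] using hc⟩
      · obtain ⟨c, hc⟩ := (Projectivization.mk_eq_mk_iff F _ _ _ (hxb x)).mp
          (Projectivization.mk_rep (e x))
        refine ⟨(c : F) * x, (c : F), ?_⟩
        rw [← hc]
        simp [Units.smul_def, smul_add, smul_smul]
  -- injectivity and non-membership
  have he_inj : Function.Injective e := by
    intro x y hxy
    rw [he_def] at hxy
    obtain ⟨c, hc⟩ := (Projectivization.mk_eq_mk_iff F _ _ _ _).mp hxy
    rw [Units.smul_def] at hc
    have h0 : ((c:F)*y - x) • a + ((c:F) - 1) • b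
        = ((c:F) • (y • a + b)) - (x • a + b) := by module
    rw [hc, sub_self] at h0
    obtain ⟨h1, h2⟩ := hpair _ _ h0
    have hc1 : (c:F) = 1 := by linear_combination h2
    rw [hc1, one_mul, sub_eq_zero] at h1
    exact h1.symm
  have hpa_not : pa ∉ Set.range e := by
    rintro ⟨x, hx⟩
    rw [he_def, hpa_def] at hx
    obtain ⟨c, hc⟩ := (Projectivization.mk_eq_mk_iff F _ _ _ _).mp hx
    rw [Units.smul_def] at hc
    have h0 : ((c:F) - x) • a + (0 - 1 : F) • b = (c:F) • a - (x • a + b) := by module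
    rw [hc, sub_self] at h0
    obtain ⟨h1, h2⟩ := hpair _ _ h0
    norm_num at h2
  -- Herm membership via representatives
  have hherm_mk : ∀ (v : Fin 3 → F) (hv : v ≠ 0),
      (Projectivization.mk F v hv ∈ Herm F q 2 ↔ ∑ i, v i ^ (q+1) = 0) := by
    intro v hv
    obtain ⟨c, hc⟩ := (Projectivization.mk_eq_mk_iff F _ _ _ hv).mp
      (Projectivization.mk_rep (Projectivization.mk F v hv))
    show (∑ i, ((Projectivization.mk F v hv).rep i)^(q+1) = 0) ↔ _
    rw [← hc]
    have hstep : ∀ i : Fin 3, (((c : Fˣ) • v) i)^(q+1) = (c:F)^(q+1) * v i^(q+1) := by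
      intro i; rw [Pi.smul_apply, Units.smul_def, smul_eq_mul, mul_pow]
    rw [Finset.sum_congr rfl (fun i _ => hstep i), ← Finset.mul_sum]
    constructor
    · intro h
      rcases mul_eq_zero.mp h with h | h
      · exact absurd h (pow_ne_zero _ c.ne_zero)
      · exact h
    · intro h; rw [h, mul_zero]
  -- the quadratic data
  set α : F := ∑ i, a i ^ (q+1) with hα_def
  set β : F := ∑ i, a i * b i ^ q with hβ_def
  set δ : F := ∑ i, b i ^ (q+1) with hδ_def
  have hsumpow : ∀ g : Fin 3 → F, (∑ i, g i)^q = ∑ i, (g i)^q := by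
    intro g
    exact map_sum (AddMonoidHom.mk' (fun z : F => z^q) (fun z w => hfrob z w)) g Finset.univ
  have hfix : ∀ z : F, (z^(q+1))^q = z^(q+1) := by
    intro z; rw [pow_succ, mul_pow, pow_qq hcard, mul_comm]
  have hα : α^q = α := by
    rw [hα_def, hsumpow]
    exact Finset.sum_congr rfl fun i _ => hfix _
  have hδq : δ^q = δ := by
    rw [hδ_def, hsumpow]
    exact Finset.sum_congr rfl fun i _ => hfix _
  have hβq : β^q = ∑ i, a i ^ q * b i := by
    rw [hβ_def, hsumpow]
    refine Finset.sum_congr rfl fun i _ => ?_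
    rw [mul_pow, pow_qq hcard]
  have hsum : ∀ x : F, ∑ i, ((x • a + b) i) ^ (q+1)
      = α * x^(q+1) + β^q * x^q + β * x + δ := by
    intro x
    have step : ∀ i : Fin 3, ((x • a + b) i)^(q+1) =
        a i^(q+1) * x^(q+1) + (a i^q * b i) * x^q + (a i * b i^q) * x + b i^(q+1) := by
      intro i
      have h1 : (x • a + b) i = x * a i + b i := by simp
      rw [h1, pow_succ, hfrob, mul_pow]
      ring
    rw [Finset.sum_congr rfl (fun i _ => step i)]
    rw [Finset.sum_add_distrib, Finset.sum_add_distrib, Finset.sum_add_distrib,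
      ← Finset.sum_mul, ← Finset.sum_mul, ← Finset.sum_mul, hβq]
  have hermE : ∀ x : F, e x ∈ Herm F q 2 ↔ α * x^(q+1) + β^q * x^q + β * x + δ = 0 := by
    intro x
    rw [he_def]
    rw [hherm_mk _ (hxb x), hsum]
  have hermPa : pa ∈ Herm F q 2 ↔ α = 0 := by
    rw [hpa_def, hherm_mk a ha, hα_def]
  -- count of the line itself
  have hcount : (lineSet F 2 W).ncard = q^2 + 1 := by
    rw [hline, Set.ncard_insert_of_notMem hpa_not (Set.toFinite _), ← Set.image_univ,
      Set.ncard_image_of_injective _ he_inj, Set.ncard_univ, Nat.card_eq_fintype_card, hcard]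
  refine ⟨?_, hcount⟩
  by_cases hα0 : α = 0
  · -- tangent point at infinity on curve
    have hSeq : lineSet F 2 W ∩ Herm F q 2
        = insert pa (e '' {x : F | α * x^(q+1) + β^q * x^q + β * x + δ = 0}) := by
      rw [hline]
      ext pt
      simp only [Set.mem_inter_iff, Set.mem_insert_iff, Set.mem_range, Set.mem_image,
        Set.mem_setOf_eq]
      constructor
      · rintro ⟨(rfl | ⟨x, rfl⟩), hherm⟩
        · exact Or.inl rfl
        · exact Or.inr ⟨x, (hermE x).mp hherm, rfl⟩
      · rintro (rfl | ⟨x, hx, rfl⟩)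
        · exact ⟨Or.inl rfl, hermPa.mpr hα0⟩
        · exact ⟨Or.inr ⟨x, rfl⟩, (hermE x).mpr hx⟩
    have hpa_img : pa ∉ e '' {x : F | α * x^(q+1) + β^q * x^q + β * x + δ = 0} := by
      rintro ⟨x, _, hx⟩
      exact hpa_not ⟨x, hx⟩
    rw [hSeq, Set.ncard_insert_of_notMem hpa_img (Set.toFinite _),
      Set.ncard_image_of_injective _ he_inj]
    by_cases hβ0 : β = 0
    · by_cases hδ0 : δ = 0
      · exfalso
        refine no_full_line hq2 hfrob hcard a b hpair hα0 hβ0 ?_ hδ0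
        rw [← hβq, hβ0, zero_pow hqz]
      · left
        have hempty : {x : F | α * x^(q+1) + β^q * x^q + β * x + δ = 0} = ∅ := by
          ext x
          simp [hα0, hβ0, zero_pow hqz, hδ0]
        rw [hempty]
        simp
    · right
      have hnegδ : (-δ)^q = -δ := by
        have h := frob_sub hfrob 0 δ
        rw [zero_pow hqz] at h
        simp only [zero_sub] at h
        rw [h, hδq]
      have hsetx : {x : F | α * x^(q+1) + β^q * x^q + β * x + δ = 0}
          = (fun u => β⁻¹ * u) '' {u : F | u + u^q = -δ} := by
        ext x
        simp only [Set.mem_image, Set.mem_setOf_eq]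
        constructor
        · intro hx
          rw [hα0, zero_mul, zero_add] at hx
          refine ⟨β * x, ?_, by field_simp⟩
          rw [mul_pow]
          linear_combination hx
        · rintro ⟨u, hu, rfl⟩
          rw [hα0, zero_mul, zero_add, mul_pow, inv_pow]
          have hβq0 : β^q ≠ 0 := pow_ne_zero _ hβ0
          have e1 : β^q * ((β^q)⁻¹ * u^q) = u^q := by field_simp
          have e2 : β * (β⁻¹ * u) = u := by field_simp
          rw [e1, e2]
          linear_combination hu
      rw [hsetx, Set.ncard_image_of_injective _ (mul_right_injective₀ (inv_ne_zero hβ0)),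
        trace_count hq2 hfrob hcard (-δ) hnegδ]
  · -- point at infinity not on curve
    have hSeq : lineSet F 2 W ∩ Herm F q 2
        = e '' {x : F | α * x^(q+1) + β^q * x^q + β * x + δ = 0} := by
      rw [hline]
      ext pt
      simp only [Set.mem_inter_iff, Set.mem_insert_iff, Set.mem_range, Set.mem_image,
        Set.mem_setOf_eq]
      constructor
      · rintro ⟨(rfl | ⟨x, rfl⟩), hherm⟩
        · exact absurd (hermPa.mp hherm) hα0
        · exact ⟨x, (hermE x).mp hherm, rfl⟩
      · rintro ⟨x, hx, rfl⟩
        exact ⟨Or.inr ⟨x, rfl⟩, (hermE x).mpr hx⟩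
    rw [hSeq, Set.ncard_image_of_injective _ he_inj]
    set c : F := β^q * α⁻¹ with hc_def
    set E : F := (β^(q+1) - α*δ) * (α⁻¹ * α⁻¹) with hE_def
    have hcq : c^q = β * α⁻¹ := by
      rw [hc_def, mul_pow, pow_qq hcard, inv_pow, hα]
    have hfac : ∀ x : F, α * x^(q+1) + β^q * x^q + β * x + δ = α * ((x + c)^(q+1) - E) := by
      intro x
      rw [pow_succ (x+c), hfrob, hcq, hE_def, hc_def]
      have h1 : x^(q+1) = x^q * x := pow_succ x q
      have h2 : β^(q+1) = β^q * β := pow_succ β q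
      rw [h1, h2]
      field_simp
      ring
    have hsetx : {x : F | α * x^(q+1) + β^q * x^q + β * x + δ = 0}
        = (fun y => y - c) '' {y : F | y^(q+1) = E} := by
      ext x
      simp only [Set.mem_image, Set.mem_setOf_eq]
      constructor
      · intro hx
        rw [hfac x] at hx
        have := (mul_eq_zero.mp hx).resolve_left hα0
        exact ⟨x + c, by linear_combination this, by ring⟩
      · rintro ⟨y, hy, rfl⟩
        rw [hfac, sub_add_cancel, hy, sub_self, mul_zero]
    rw [hsetx, Set.ncard_image_of_injective _ (fun u v huv => by
      simpa [sub_left_inj] using huv : Function.Injective (fun y : F => y - c))]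
    by_cases hE0 : E = 0
    · left
      have : {y : F | y^(q+1) = E} = {0} := by
        ext y
        simp [hE0, pow_eq_zero_iff (show q + 1 ≠ 0 by omega)]
      rw [this]
      simp
    · right
      have hEq : E^q = E := by
        have hinv : (α⁻¹)^q = α⁻¹ := by rw [inv_pow, hα]
        rw [hE_def]
        simp only [mul_pow]
        rw [frob_sub hfrob, hfix β]
        simp only [mul_pow]
        rw [hα, hδq, hinv]
      exact norm_count hq2 hcard E hE0 hEq

end Key

/-- Every line of `PG(2,q^2)` meets the Hermitian curve `H(2,q^2)` in exactly
`1` or exactly `q+1` points; in particular `H(2,q^2)` contains no line. -/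
theorem line_meets_herm (q : ℕ) (hq : IsPrimePow q) (hF : Fintype.card F = q ^ 2)
    (W : Submodule F (Fin 3 → F)) (hW : IsLine F 2 W) :
    ((lineSet F 2 W ∩ Herm F q 2).ncard = 1 ∨
      (lineSet F 2 W ∩ Herm F q 2).ncard = q + 1) ∧
    ¬ lineSet F 2 W ⊆ Herm F q 2 := by
  have hq2 : 2 ≤ q := hq.two_le
  have hfrob : ∀ x y : F, (x + y)^q = x^q + y^q := by
    obtain ⟨p, n, hp, hn, rfl⟩ := hq
    have hp' : Nat.Prime p := Nat.prime_iff.mpr hp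
    haveI hfact : Fact (Nat.Prime p) := ⟨hp'⟩
    have hchar : CharP F p := by
      have h0 : ((p:F))^(n*2) = 0 := by
        have hc := FiniteField.cast_card_eq_zero F
        rw [hF] at hc
        push_cast at hc
        rw [← pow_mul] at hc
        exact hc
      have hp0 : (p : F) = 0 :=
        pow_eq_zero_iff (show n*2 ≠ 0 by omega) |>.mp h0
      have hdvd : ringChar F ∣ p := (CharP.cast_eq_zero_iff F (ringChar F) p).mp hp0
      have hpr : (ringChar F).Prime := CharP.char_is_prime F (ringChar F)
      have heq : ringChar F = p := (Nat.prime_dvd_prime_iff_eq hpr hp').mp hdvd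
      rw [← heq]
      exact ringChar.charP F
    haveI := hchar
    intro x y
    exact add_pow_char_pow x y p n
  obtain ⟨h1, h2⟩ := key hq2 hfrob hF W hW
  refine ⟨h1, ?_⟩
  intro hsub
  have hint : lineSet F 2 W ∩ Herm F q 2 = lineSet F 2 W := Set.inter_eq_left.mpr hsub
  rw [hint, h2] at h1
  rcases h1 with h | h <;> nlinarith
end

section
/- Let q be a prime power. For every line ℓ of PG(2,q^2) tangent to the Hermitian curve H(2,q^2), the set of the q^2 points of ℓ not lying on H(2,q^2) is a maximal clique of the graph NU(3,q^2). -/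
open Projectivization
open scoped LinearAlgebra.Projectivization

variable (F : Type) [Field F] [Fintype F]

/-- The set of vertices of `NU(n+1,q^2)` (non-isotropic points) lying on the line `W`. -/
def lineVerts (q n : ℕ) (W : Submodule F (Fin (n+1) → F)) :
    Set {p : PG F n // p ∉ Herm F q n} :=
  {u | u.1 ∈ lineSet F n W}

set_option linter.unusedSectionVars false
set_option maxHeartbeats 1000000

variable {F}

/-! ### Auxiliary algebraic lemmas -/

def hermQ (q : ℕ) (v : Fin 3 → F) : F := ∑ i, v i ^ (q+1)
def hermB (q : ℕ) (u v : Fin 3 → F) : F := ∑ i, u i ^ q * v i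

lemma hermQ_eq (q : ℕ) (v : Fin 3 → F) : hermQ q v = hermB q v v := by
  simp [hermQ, hermB, pow_succ]

lemma hermQ_smul (q : ℕ) (a : F) (v : Fin 3 → F) :
    hermQ q (a • v) = a ^ (q+1) * hermQ q v := by
  simp [hermQ, mul_pow, Finset.mul_sum]

lemma hermB_smul_right (q : ℕ) (a : F) (u v : Fin 3 → F) :
    hermB q u (a • v) = a * hermB q u v := by
  simp [hermB, Finset.mul_sum, mul_left_comm]

lemma hermB_smul_left (q : ℕ) (a : F) (u v : Fin 3 → F) :
    hermB q (a • u) v = a ^ q * hermB q u v := by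
  simp [hermB, mul_pow, Finset.mul_sum, mul_assoc]

lemma hermB_add_right (q : ℕ) (u v w : Fin 3 → F) :
    hermB q u (v + w) = hermB q u v + hermB q u w := by
  simp [hermB, mul_add, Finset.sum_add_distrib]

lemma hermB_add_left (q : ℕ) (φ : F →+* F) (hφ : ∀ x : F, φ x = x ^ q) (u v w : Fin 3 → F) :
    hermB q (u + v) w = hermB q u w + hermB q v w := by
  simp only [hermB, ← Finset.sum_add_distrib]
  refine Finset.sum_congr rfl fun i _ => ?_
  have h : (u i + v i) ^ q = u i ^ q + v i ^ q := by
    rw [← hφ, ← hφ, ← hφ, map_add]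
  simp [h, add_mul]

lemma hermB_conj (q : ℕ) (hF : Fintype.card F = q ^ 2) (φ : F →+* F)
    (hφ : ∀ x : F, φ x = x ^ q) (u v : Fin 3 → F) :
    (hermB q u v) ^ q = hermB q v u := by
  rw [← hφ, hermB, map_sum]
  refine Finset.sum_congr rfl fun i _ => ?_
  rw [map_mul, hφ, hφ, ← pow_mul]
  have h2 : q * q = Fintype.card F := by rw [hF, pow_two]
  rw [h2, FiniteField.pow_card, mul_comm]

lemma hermQ_combo (q : ℕ) (φ : F →+* F) (hφ : ∀ x : F, φ x = x ^ q) (x y : Fin 3 → F) (a : F) :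
    hermQ q (x + a • y)
      = hermQ q x + a * hermB q x y + a ^ q * hermB q y x + a ^ q * a * hermQ q y := by
  rw [hermQ_eq, hermB_add_left q φ hφ, hermB_add_right, hermB_add_right,
    hermB_smul_left, hermB_smul_right, hermB_smul_right, hermB_smul_left,
    ← hermQ_eq, ← hermQ_eq]
  ring

lemma exists_frob (q : ℕ) (hq : IsPrimePow q) (hF : Fintype.card F = q ^ 2) :
    ∃ φ : F →+* F, ∀ x : F, φ x = x ^ q := by
  obtain ⟨p, k, hp, hk, rfl⟩ := hq
  have hp' : p.Prime := hp.nat_prime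
  set pc := ringChar F with hpc
  haveI : CharP F pc := ringChar.charP F
  obtain ⟨n, hpcp, hcard⟩ := FiniteField.card F pc
  have hpeq : pc = p := by
    have hdvd : p ∣ pc ^ (n : ℕ) := by
      rw [← hcard, hF, ← pow_mul]
      exact dvd_pow_self p (by positivity)
    exact ((Nat.prime_dvd_prime_iff_eq hp' hpcp).1 (hp'.dvd_of_dvd_pow hdvd)).symm
  haveI : CharP F p := hpeq ▸ (ringChar.charP F)
  haveI : Fact p.Prime := ⟨hp'⟩
  haveI : ExpChar F p := ExpChar.prime hp'
  exact ⟨iterateFrobenius F p k, fun x => iterateFrobenius_def p k x⟩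

lemma root_set_ncard_le (P : Polynomial F) (hP : P ≠ 0) :
    {x : F | Polynomial.eval x P = 0}.ncard ≤ P.natDegree := by
  classical
  have hsub : {x : F | Polynomial.eval x P = 0} ⊆ ↑P.roots.toFinset := by
    intro x hx
    exact Finset.mem_coe.2 (Multiset.mem_toFinset.2 ((Polynomial.mem_roots hP).2 hx))
  calc {x : F | Polynomial.eval x P = 0}.ncard ≤ (↑P.roots.toFinset : Set F).ncard :=
        Set.ncard_le_ncard hsub (Set.toFinite _)
    _ = P.roots.toFinset.card := Set.ncard_coe_finset _
    _ ≤ Multiset.card P.roots := Multiset.toFinset_card_le _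
    _ ≤ P.natDegree := Polynomial.card_roots' P

lemma pow_set_ncard_le (q : ℕ) (hq2 : 2 ≤ q) (c : F) :
    {x : F | x ^ q + c * x = 0}.ncard ≤ q := by
  classical
  set P : Polynomial F := Polynomial.X ^ q + Polynomial.C c * Polynomial.X with hP
  have hmonic : P.Monic := by
    apply Polynomial.monic_X_pow_add
    calc (Polynomial.C c * Polynomial.X : Polynomial F).degree
        ≤ (Polynomial.C c).degree + Polynomial.X.degree := Polynomial.degree_mul_le _ _
      _ ≤ 0 + 1 := add_le_add Polynomial.degree_C_le Polynomial.degree_X_le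
      _ = 1 := by simp
      _ < (q : WithBot ℕ) := by exact_mod_cast Nat.lt_of_lt_of_le one_lt_two hq2
  have hdeg : P.natDegree ≤ q := by
    apply le_trans (Polynomial.natDegree_add_le _ _)
    simp only [Polynomial.natDegree_X_pow]
    have : (Polynomial.C c * Polynomial.X : Polynomial F).natDegree ≤ 1 := by
      apply le_trans (Polynomial.natDegree_mul_le)
      simp [Polynomial.natDegree_C, Polynomial.natDegree_X]
    omega
  have heq : {x : F | x ^ q + c * x = 0} = {x : F | Polynomial.eval x P = 0} := by
    ext x; simp [hP]
  rw [heq]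
  exact le_trans (root_set_ncard_le P hmonic.ne_zero) hdeg

lemma trace_surj (q : ℕ) (hq2 : 2 ≤ q) (hF : Fintype.card F = q ^ 2)
    (φ : F →+* F) (hφ : ∀ x : F, φ x = x ^ q) (a : F) (ha : a ^ q = a) :
    ∃ x : F, x + x ^ q = a := by
  have hq0 : q ≠ 0 := by omega
  have hqq : ∀ x : F, (x ^ q) ^ q = x := by
    intro x
    rw [← pow_mul, show q * q = Fintype.card F by rw [hF, pow_two], FiniteField.pow_card]
  set T : F →+ F :=
    { toFun := fun x => x + x ^ q
      map_zero' := by simp [zero_pow hq0]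
      map_add' := fun x y => by
        have h : (x + y) ^ q = x ^ q + y ^ q := by rw [← hφ, ← hφ, ← hφ, map_add]
        simp only [h]; ring } with hTdef
  have hTx : ∀ x : F, T x = x + x ^ q := fun x => rfl
  have hkerset : (T.ker : Set F) = {x : F | x ^ q + 1 * x = 0} := by
    ext x
    simp only [SetLike.mem_coe, AddMonoidHom.mem_ker, hTx, Set.mem_setOf_eq, one_mul]
    constructor <;> intro h <;> linear_combination h
  have hker : Nat.card T.ker ≤ q := by
    rw [← SetLike.coe_sort_coe, Nat.card_coe_set_eq, hkerset]
    exact pow_set_ncard_le q hq2 1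
  have hcardeq : Nat.card T.range * Nat.card T.ker = q ^ 2 := by
    rw [← Nat.card_congr (QuotientAddGroup.quotientKerEquivRange T).toEquiv,
      ← AddSubgroup.card_eq_card_quotient_mul_card_addSubgroup, Nat.card_eq_fintype_card, hF]
  have hrange : q ≤ Nat.card T.range := by
    have hkpos : 0 < Nat.card T.ker := Nat.card_pos
    nlinarith [hcardeq, hker, hkpos]
  have hKset : (T.range : Set F) ⊆ {x : F | x ^ q + (-1) * x = 0} := by
    rintro y ⟨x, rfl⟩
    have h : (x + x ^ q) ^ q = x ^ q + (x ^ q) ^ q := by rw [← hφ, ← hφ, ← hφ, map_add]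
    simp only [Set.mem_setOf_eq, hTx, h, hqq]
    ring
  have hKcard : {x : F | x ^ q + (-1) * x = 0}.ncard ≤ q := pow_set_ncard_le q hq2 (-1)
  have hseteq : (T.range : Set F) = {x : F | x ^ q + (-1) * x = 0} := by
    apply Set.eq_of_subset_of_ncard_le hKset _ (Set.toFinite _)
    calc {x : F | x ^ q + (-1) * x = 0}.ncard ≤ q := hKcard
      _ ≤ Nat.card T.range := hrange
      _ = (T.range : Set F).ncard := by rw [← SetLike.coe_sort_coe, Nat.card_coe_set_eq]
  have haK : a ∈ (T.range : Set F) := by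
    rw [hseteq]
    simp only [Set.mem_setOf_eq, ha]; ring
  obtain ⟨x, hx⟩ := haK
  exact ⟨x, hx⟩

lemma exists_zeta (q : ℕ) (hq2 : 2 ≤ q) (hF : Fintype.card F = q ^ 2) :
    ∃ ζ : F, ζ ^ (q + 1) = 1 ∧ ζ ≠ 1 := by
  classical
  obtain ⟨g, hg⟩ := IsCyclic.exists_generator (α := Fˣ)
  have hord : orderOf g = q ^ 2 - 1 := by
    rw [orderOf_eq_card_of_forall_mem_zpowers hg, Nat.card_eq_fintype_card,
      Fintype.card_units, hF]
  refine ⟨((g : Fˣ) : F) ^ (q - 1), ?_, ?_⟩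
  · have hexp : (q - 1) * (q + 1) = q ^ 2 - 1 := by
      have h1 : 1 ≤ q ^ 2 := Nat.one_le_pow _ _ (by omega)
      zify [show 1 ≤ q by omega, h1]
      ring
    have hgone : (g ^ ((q - 1) * (q + 1)) : Fˣ) = 1 := by
      rw [hexp, ← hord, pow_orderOf_eq_one]
    calc (((g : Fˣ) : F) ^ (q - 1)) ^ (q + 1) = ((g ^ ((q - 1) * (q + 1)) : Fˣ) : F) := by
          push_cast [← pow_mul]; ring
      _ = 1 := by rw [hgone]; rfl
  · intro hone
    have hu : (g ^ (q - 1) : Fˣ) = 1 := by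
      ext; push_cast; exact hone
    have hdvd : orderOf g ∣ q - 1 := orderOf_dvd_of_pow_eq_one hu
    rw [hord] at hdvd
    have hle : q ^ 2 - 1 ≤ q - 1 := Nat.le_of_dvd (by omega) hdvd
    have hqQ : q < q ^ 2 := by nlinarith
    omega

/-! ### Projective geometry lemmas -/

lemma NU_adj (q : ℕ) (u v : {p : PG F 2 // p ∉ Herm F q 2}) :
    (NU F q 2).Adj u v ↔ u ≠ v ∧ IsTangent F q 2 (Submodule.span F {u.1.rep, v.1.rep}) :=
  Iff.rfl

lemma mem_Herm_iff (q : ℕ) (x : PG F 2) : x ∈ Herm F q 2 ↔ hermQ q x.rep = 0 :=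
  Iff.rfl

lemma mem_Herm_mk (q : ℕ) {v : Fin 3 → F} (hv : v ≠ 0) :
    Projectivization.mk F v hv ∈ Herm F q 2 ↔ hermQ q v = 0 := by
  obtain ⟨c, hc⟩ := Projectivization.exists_smul_eq_mk_rep F v hv
  rw [mem_Herm_iff, ← hc, Units.smul_def, hermQ_smul]
  have hc0 : (c : F) ^ (q + 1) ≠ 0 := pow_ne_zero _ c.ne_zero
  constructor
  · intro h
    rcases mul_eq_zero.1 h with h | h
    · exact absurd h hc0
    · exact h
  · intro h; rw [h, mul_zero]

lemma mem_lineSet_mk {v : Fin 3 → F} (hv : v ≠ 0) (W : Submodule F (Fin 3 → F)) :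
    Projectivization.mk F v hv ∈ lineSet F 2 W ↔ v ∈ W := by
  show (Projectivization.mk F v hv).submodule ≤ W ↔ v ∈ W
  rw [Projectivization.submodule_mk, Submodule.span_singleton_le_iff_mem]

lemma rep_mem_of_mem_lineSet {x : PG F 2} {W : Submodule F (Fin 3 → F)}
    (h : x ∈ lineSet F 2 W) : x.rep ∈ W := by
  apply h
  rw [Projectivization.submodule_eq]
  exact Submodule.mem_span_singleton_self _

lemma pair_inj {x y : Fin 3 → F} (li : LinearIndependent F ![x, y]) {a b a' b' : F}
    (h : a • x + b • y = a' • x + b' • y) : a = a' ∧ b = b' := by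
  have h0 : (a - a') • x + (b - b') • y = 0 := by
    rw [sub_smul, sub_smul, sub_add_sub_comm, h, sub_self]
  obtain ⟨h1, h2⟩ := LinearIndependent.pair_iff.1 li _ _ h0
  exact ⟨sub_eq_zero.1 h1, sub_eq_zero.1 h2⟩

lemma span_pair_eq_of (W : Submodule F (Fin 3 → F)) (h2 : Module.finrank F W = 2)
    {x y : Fin 3 → F} (hx : x ∈ W) (hy : y ∈ W) (hx0 : x ≠ 0)
    (hyx : y ∉ Submodule.span F {x}) :
    Submodule.span F {x, y} = W := by
  have li : LinearIndependent F ![x, y] := (LinearIndependent.pair_iff' hx0).2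
    (fun a ha => hyx (Submodule.mem_span_singleton.2 ⟨a, ha⟩))
  have hrange : Set.range ![x, y] = {x, y} := Matrix.range_cons_cons_empty x y ![]
  have hr : Module.finrank F (Submodule.span F {x, y}) = 2 := by
    rw [← hrange, finrank_span_eq_card li, Fintype.card_fin]
  apply Submodule.eq_of_le_of_finrank_le
  · rw [Submodule.span_le, Set.insert_subset_iff, Set.singleton_subset_iff]
    exact ⟨hx, hy⟩
  · rw [h2, hr]

/-- The key criterion: a line joining two non-isotropic points `s`, `w` with
`hermB q s w = 0` is not tangent. -/
lemma not_tangent (q : ℕ) (hq2 : 2 ≤ q) (hF : Fintype.card F = q ^ 2)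
    (φ : F →+* F) (hφ : ∀ x : F, φ x = x ^ q)
    (s w : Fin 3 → F) (hQs : hermQ q s ≠ 0) (hQw : hermQ q w ≠ 0)
    (hB : hermB q s w = 0) : ¬ IsTangent F q 2 (Submodule.span F {s, w}) := by
  rintro ⟨-, hcard1⟩
  have hq0 : q ≠ 0 := by omega
  have hs0 : s ≠ 0 := by rintro rfl; exact hQs (by simp [hermQ, zero_pow])
  have hw0 : w ≠ 0 := by rintro rfl; exact hQw (by simp [hermQ, zero_pow])
  have hBws : hermB q w s = 0 := by
    rw [← hermB_conj q hF φ hφ s w, hB, zero_pow hq0]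
  have li : LinearIndependent F ![s, w] := by
    refine (LinearIndependent.pair_iff' hs0).2 (fun a ha => ?_)
    have : hermB q s w = a * hermQ q s := by
      rw [← ha, hermB_smul_right, ← hermQ_eq]
    rw [hB] at this
    rcases mul_eq_zero.1 this.symm with h | h
    · rw [h, zero_smul] at ha
      exact hQw (by rw [← ha]; simp [hermQ, zero_pow])
    · exact hQs h
  obtain ⟨X, hX⟩ := Set.ncard_eq_one.1 hcard1
  have hXmem : X ∈ lineSet F 2 (Submodule.span F {s, w}) ∩ Herm F q 2 := by
    rw [hX]; exact rfl
  obtain ⟨α, β, hαβ⟩ := Submodule.mem_span_pair.1 (rep_mem_of_mem_lineSet hXmem.1)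
  have hQX : hermQ q X.rep = 0 := hXmem.2
  have hα : α ≠ 0 := by
    rintro rfl
    rw [zero_smul, zero_add] at hαβ
    have hβ : β ≠ 0 := by
      rintro rfl
      exact X.rep_nonzero (by rw [← hαβ, zero_smul])
    rw [← hαβ, hermQ_smul] at hQX
    exact hQw ((mul_eq_zero.1 hQX).resolve_left (pow_ne_zero _ hβ))
  set μ := β / α with hμdef
  have hrep : X.rep = α • (s + μ • w) := by
    rw [smul_add, smul_smul, mul_div_cancel₀ _ hα, hαβ]
  have hkey : hermQ q (s + μ • w) = 0 := by
    rw [hrep, hermQ_smul] at hQX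
    exact (mul_eq_zero.1 hQX).resolve_left (pow_ne_zero _ hα)
  have hμexp : hermQ q s + μ ^ q * μ * hermQ q w = 0 := by
    rw [hermQ_combo q φ hφ s w μ, hB, hBws] at hkey
    linear_combination hkey
  have hμ0 : μ ≠ 0 := by
    intro h0
    rw [h0, zero_pow hq0, zero_mul, zero_mul, add_zero] at hμexp
    exact hQs hμexp
  obtain ⟨ζ, hζ1, hζne⟩ := exists_zeta q hq2 hF
  have hkey2 : hermQ q (s + (ζ * μ) • w) = 0 := by
    rw [hermQ_combo q φ hφ s w (ζ * μ), hB, hBws]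
    have hzm : (ζ * μ) ^ q * (ζ * μ) = μ ^ q * μ := by
      have : (ζ * μ) ^ q * (ζ * μ) = ζ ^ (q + 1) * (μ ^ q * μ) := by ring
      rw [this, hζ1, one_mul]
    rw [hzm]
    linear_combination hμexp
  have hz1 : s + μ • w ≠ 0 := by
    intro h0
    have := (LinearIndependent.pair_iff.1 li 1 μ (by rw [one_smul]; exact h0)).1
    exact one_ne_zero this
  have hz2 : s + (ζ * μ) • w ≠ 0 := by
    intro h0
    have := (LinearIndependent.pair_iff.1 li 1 (ζ * μ) (by rw [one_smul]; exact h0)).1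
    exact one_ne_zero this
  have hmem1 : Projectivization.mk F (s + μ • w) hz1
      ∈ lineSet F 2 (Submodule.span F {s, w}) ∩ Herm F q 2 := by
    refine ⟨(mem_lineSet_mk hz1 _).2 ?_, (mem_Herm_mk q hz1).2 hkey⟩
    exact Submodule.mem_span_pair.2 ⟨1, μ, by rw [one_smul]⟩
  have hmem2 : Projectivization.mk F (s + (ζ * μ) • w) hz2
      ∈ lineSet F 2 (Submodule.span F {s, w}) ∩ Herm F q 2 := by
    refine ⟨(mem_lineSet_mk hz2 _).2 ?_, (mem_Herm_mk q hz2).2 hkey2⟩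
    exact Submodule.mem_span_pair.2 ⟨1, ζ * μ, by rw [one_smul]⟩
  rw [hX, Set.mem_singleton_iff] at hmem1 hmem2
  have heq : Projectivization.mk F (s + μ • w) hz1
      = Projectivization.mk F (s + (ζ * μ) • w) hz2 := by rw [hmem1, hmem2]
  obtain ⟨c, hc⟩ := (Projectivization.mk_eq_mk_iff F _ _ hz1 hz2).1 heq
  rw [Units.smul_def, smul_add, smul_smul] at hc
  have hc' : (c : F) • s + ((c : F) * (ζ * μ)) • w = (1 : F) • s + μ • w := by
    rw [hc, one_smul]
  obtain ⟨hc1, hc2⟩ := pair_inj li hc'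
  rw [hc1, one_mul] at hc2
  exact hζne (by field_simp at hc2; exact hc2)

variable (F)

/-- For every tangent line `W` to `H(2,q^2)`, the set of the `q^2` points of
the line not on `H(2,q^2)` is a maximal clique of `NU(3,q^2)`. -/
theorem tangent_line_maximal_clique (q : ℕ) (hq : IsPrimePow q)
    (hF : Fintype.card F = q ^ 2)
    (W : Submodule F (Fin 3 → F)) (hW : IsTangent F q 2 W) :
    (lineVerts F q 2 W).ncard = q ^ 2 ∧
    (NU F q 2).IsClique (lineVerts F q 2 W) ∧
    ∀ T : Set {p : PG F 2 // p ∉ Herm F q 2},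
      (NU F q 2).IsClique T → lineVerts F q 2 W ⊆ T → T = lineVerts F q 2 W := by
  classical
  obtain ⟨φ, hφ⟩ := exists_frob q hq hF
  have hq2 : 2 ≤ q := hq.two_le
  have hq0 : q ≠ 0 := by omega
  have hWr : Module.finrank F W = 2 := hW.1
  obtain ⟨P₀, hP₀set⟩ := Set.ncard_eq_one.1 hW.2
  have hP₀ : P₀ ∈ lineSet F 2 W ∩ Herm F q 2 := by rw [hP₀set]; exact rfl
  have huniq : ∀ x, x ∈ lineSet F 2 W ∩ Herm F q 2 → x = P₀ := by
    intro x hx; rw [hP₀set] at hx; exact hx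
  set p := P₀.rep with hpdef
  have hp0 : p ≠ 0 := P₀.rep_nonzero
  have hpW : p ∈ W := rep_mem_of_mem_lineSet hP₀.1
  have hQp : hermQ q p = 0 := hP₀.2
  have hmkp : Projectivization.mk F p hp0 = P₀ := Projectivization.mk_rep P₀
  -- pick a second basis vector for the line
  have hex : ∃ u, u ∈ W ∧ u ∉ Submodule.span F {p} := by
    by_contra hcon
    push_neg at hcon
    have hle : W ≤ Submodule.span F {p} := fun v hv => hcon v hv
    have hmono : Module.finrank F W ≤ Module.finrank F (Submodule.span F {p}) :=
      Submodule.finrank_mono hle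
    rw [hWr, finrank_span_singleton hp0] at hmono
    omega
  obtain ⟨u, huW, hu⟩ := hex
  have hu0 : u ≠ 0 := fun h => hu (h ▸ Submodule.zero_mem _)
  -- claim B : hermB q u p = 0
  have hBup : hermB q u p = 0 := by
    by_contra he
    have ha : (hermQ q u) ^ q = hermQ q u := by
      rw [hermQ_eq, hermB_conj q hF φ hφ]
    have hnegk : (-(hermQ q u)) ^ q = -(hermQ q u) := by rw [← hφ, map_neg, hφ, ha]
    obtain ⟨x, hx⟩ := trace_surj q hq2 hF φ hφ _ hnegk
    set lam := x / hermB q u p with hlam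
    have hlame : lam * hermB q u p = x := div_mul_cancel₀ x he
    have hz : hermQ q (u + lam • p) = 0 := by
      rw [hermQ_combo q φ hφ, hQp, ← hermB_conj q hF φ hφ u p, ← mul_pow, hlame]
      linear_combination hx
    have hz0 : u + lam • p ≠ 0 := by
      intro h0
      apply hu
      have : u = (-lam) • p := by
        rw [neg_smul]
        exact eq_neg_of_add_eq_zero_left h0
      exact Submodule.mem_span_singleton.2 ⟨-lam, this.symm⟩
    have hmem : Projectivization.mk F (u + lam • p) hz0 ∈ lineSet F 2 W ∩ Herm F q 2 :=
      ⟨(mem_lineSet_mk hz0 W).2 (Submodule.add_mem _ huW (Submodule.smul_mem _ _ hpW)),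
        (mem_Herm_mk q hz0).2 hz⟩
    have heqP : Projectivization.mk F (u + lam • p) hz0 = Projectivization.mk F p hp0 := by
      rw [hmkp]; exact huniq _ hmem
    obtain ⟨c, hc⟩ := (Projectivization.mk_eq_mk_iff F _ _ hz0 hp0).1 heqP
    rw [Units.smul_def] at hc
    apply hu
    refine Submodule.mem_span_singleton.2 ⟨(c : F) - lam, ?_⟩
    rw [sub_smul, hc]
    abel
  have hBpu : hermB q p u = 0 := by
    rw [← hermB_conj q hF φ hφ u p, hBup, zero_pow hq0]
  -- claim A : hermQ q u ≠ 0
  have hQu : hermQ q u ≠ 0 := by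
    intro hQu0
    have hmem : Projectivization.mk F u hu0 ∈ lineSet F 2 W ∩ Herm F q 2 :=
      ⟨(mem_lineSet_mk hu0 W).2 huW, (mem_Herm_mk q hu0).2 hQu0⟩
    have heqP : Projectivization.mk F u hu0 = Projectivization.mk F p hp0 := by
      rw [hmkp]; exact huniq _ hmem
    obtain ⟨c, hc⟩ := (Projectivization.mk_eq_mk_iff F _ _ hu0 hp0).1 heqP
    rw [Units.smul_def] at hc
    exact hu (Submodule.mem_span_singleton.2 ⟨(c : F), hc⟩)
  have hWspan : Submodule.span F {p, u} = W := span_pair_eq_of W hWr hpW huW hp0 hu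
  have li : LinearIndependent F ![p, u] := (LinearIndependent.pair_iff' hp0).2
    (fun a ha => hu (Submodule.mem_span_singleton.2 ⟨a, ha⟩))
  have hz0 : ∀ lam : F, u + lam • p ≠ 0 := by
    intro lam h0
    apply hu
    have : u = (-lam) • p := by
      rw [neg_smul]
      exact eq_neg_of_add_eq_zero_left h0
    exact Submodule.mem_span_singleton.2 ⟨-lam, this.symm⟩
  have hQline : ∀ lam : F, hermQ q (u + lam • p) = hermQ q u := by
    intro lam
    rw [hermQ_combo q φ hφ, hQp, hBup, hBpu]
    ring
  have hnH : ∀ lam : F, Projectivization.mk F (u + lam • p) (hz0 lam) ∉ Herm F q 2 := by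
    intro lam h
    exact hQu ((hQline lam) ▸ (mem_Herm_mk q (hz0 lam)).1 h)
  have hmemW : ∀ lam : F, u + lam • p ∈ W := fun lam =>
    Submodule.add_mem _ huW (Submodule.smul_mem _ _ hpW)
  have hmemLV : ∀ lam : F,
      (⟨Projectivization.mk F (u + lam • p) (hz0 lam), hnH lam⟩ :
        {x : PG F 2 // x ∉ Herm F q 2}) ∈ lineVerts F q 2 W := by
    intro lam
    show Projectivization.mk F (u + lam • p) (hz0 lam) ∈ lineSet F 2 W
    exact (mem_lineSet_mk (hz0 lam) W).2 (hmemW lam)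
  -- the parametrization of the vertices on the line
  have e : F ≃ ↥(lineVerts F q 2 W) := by
    refine Equiv.ofBijective
      (fun lam => ⟨⟨Projectivization.mk F (u + lam • p) (hz0 lam), hnH lam⟩, hmemLV lam⟩)
      ⟨?_, ?_⟩
    · intro lam lam' h
      have h1 : Projectivization.mk F (u + lam • p) (hz0 lam)
          = Projectivization.mk F (u + lam' • p) (hz0 lam') := by
        exact congrArg (fun z => z.1.1) h
      obtain ⟨c, hc⟩ := (Projectivization.mk_eq_mk_iff F _ _ _ _).1 h1
      rw [Units.smul_def, smul_add, smul_smul] at hc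
      have hc' : ((c : F) * lam') • p + (c : F) • u = lam • p + (1 : F) • u := by
        rw [one_smul]
        linear_combination (norm := module) hc
      obtain ⟨h2, h3⟩ := pair_inj li hc'
      rw [h3, one_mul] at h2
      exact h2.symm
    · rintro ⟨⟨x, hxH⟩, hxL⟩
      have hrepW : x.rep ∈ Submodule.span F {p, u} := by
        rw [hWspan]
        exact rep_mem_of_mem_lineSet hxL
      obtain ⟨α, β, hαβ⟩ := Submodule.mem_span_pair.1 hrepW
      have hβ : β ≠ 0 := by
        rintro rfl
        rw [zero_smul, add_zero] at hαβ
        have hQX : hermQ q x.rep ≠ 0 := fun h => hxH h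
        rw [← hαβ, hermQ_smul, hQp, mul_zero] at hQX
        exact hQX rfl
      refine ⟨α / β, ?_⟩
      apply Subtype.ext
      apply Subtype.ext
      show Projectivization.mk F (u + (α / β) • p) _ = x
      rw [← Projectivization.mk_rep x]
      apply (Projectivization.mk_eq_mk_iff F _ _ _ _).2
      refine ⟨(Units.mk0 β hβ)⁻¹, ?_⟩
      rw [Units.smul_def, ← hαβ]
      show (Units.mk0 β hβ)⁻¹.1 • (α • p + β • u) = u + (α / β) • p
      rw [Units.val_inv_eq_inv_val, Units.val_mk0, smul_add, smul_smul, smul_smul,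
        inv_mul_cancel₀ hβ, one_smul, div_eq_inv_mul]
      abel
  refine ⟨?_, ?_, ?_⟩
  · rw [← Nat.card_coe_set_eq, ← Nat.card_congr e, Nat.card_eq_fintype_card, hF]
  · intro x hx y hy hxy
    refine (NU_adj q x y).2 ⟨hxy, ?_⟩
    have hxW : x.1.rep ∈ W := rep_mem_of_mem_lineSet hx
    have hyW : y.1.rep ∈ W := rep_mem_of_mem_lineSet hy
    have hx0 : x.1.rep ≠ 0 := x.1.rep_nonzero
    have hyx : y.1.rep ∉ Submodule.span F {x.1.rep} := by
      intro hmem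
      obtain ⟨a, ha⟩ := Submodule.mem_span_singleton.1 hmem
      have ha0 : a ≠ 0 := by
        rintro rfl
        rw [zero_smul] at ha
        exact y.1.rep_nonzero ha.symm
      have hyx1 : y.1 = x.1 := by
        rw [← Projectivization.mk_rep y.1, ← Projectivization.mk_rep x.1]
        exact (Projectivization.mk_eq_mk_iff F _ _ _ _).2
          ⟨Units.mk0 a ha0, by rw [Units.smul_def]; exact ha⟩
      exact hxy (Subtype.ext hyx1).symm
    rw [span_pair_eq_of W hWr hxW hyW hx0 hyx]
    exact hW
  · intro T hT hsub
    refine Set.Subset.antisymm ?_ hsub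
    intro t ht
    by_contra hlv
    have htr : t.1.rep ∉ W := by
      intro hmem
      apply hlv
      show t.1 ∈ lineSet F 2 W
      show t.1.submodule ≤ W
      rw [Projectivization.submodule_eq, Submodule.span_singleton_le_iff_mem]
      exact hmem
    have hQt : hermQ q t.1.rep ≠ 0 := fun h => t.2 h
    -- the polar line of p is W, so hermB q t.1.rep p ≠ 0
    have hγ : hermB q t.1.rep p ≠ 0 := by
      intro hγ0
      set ℓ : (Fin 3 → F) →ₗ[F] F :=
        { toFun := fun x => hermB q p x
          map_add' := fun a b => hermB_add_right q p a b
          map_smul' := fun a x => by simpa using hermB_smul_right q a p x } with hldef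
      have hl : ∀ x, ℓ x = hermB q p x := fun _ => rfl
      have hWker : W ≤ LinearMap.ker ℓ := by
        rw [← hWspan, Submodule.span_le, Set.insert_subset_iff, Set.singleton_subset_iff]
        constructor
        · rw [SetLike.mem_coe, LinearMap.mem_ker, hl, ← hermQ_eq]
          exact hQp
        · rw [SetLike.mem_coe, LinearMap.mem_ker, hl]
          exact hBpu
      have hlrange : LinearMap.range ℓ = ⊤ := by
        rw [LinearMap.range_eq_top]
        intro y
        obtain ⟨j, hj⟩ := Function.ne_iff.1 hp0
        have hsing : ℓ ((Pi.single j (1 : F) : Fin 3 → F)) = p j ^ q := by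
          rw [hl]
          show (∑ i, p i ^ q * (Pi.single j (1 : F) : Fin 3 → F) i) = p j ^ q
          rw [Finset.sum_eq_single j]
          · simp
          · intro i _ hij
            simp [Pi.single_apply, hij]
          · intro hj'
            exact absurd (Finset.mem_univ j) hj'
        have hpj : p j ^ q ≠ 0 := pow_ne_zero _ (by simpa using hj)
        refine ⟨(y / (p j ^ q)) • (Pi.single j (1 : F) : Fin 3 → F), ?_⟩
        rw [map_smul, hsing]
        show y / p j ^ q * p j ^ q = y
        field_simp
      have hkerrank : Module.finrank F (LinearMap.ker ℓ) = 2 := by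
        have h3 := LinearMap.finrank_range_add_finrank_ker ℓ
        rw [hlrange, finrank_top, Module.finrank_self] at h3
        have hdim : Module.finrank F (Fin 3 → F) = 3 := by
          rw [Module.finrank_pi, Fintype.card_fin]
        rw [hdim] at h3
        omega
      have hWk : W = LinearMap.ker ℓ :=
        Submodule.eq_of_le_of_finrank_le hWker (by rw [hWr, hkerrank])
      apply htr
      rw [hWk, LinearMap.mem_ker, hl, ← hermB_conj q hF φ hφ t.1.rep p, hγ0, zero_pow hq0]
    set lam := -(hermB q t.1.rep u / hermB q t.1.rep p) with hlamdef
    have hBtw : hermB q t.1.rep (u + lam • p) = 0 := by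
      rw [hermB_add_right, hermB_smul_right, hlamdef]
      field_simp
      ring
    set vw : {x : PG F 2 // x ∉ Herm F q 2} :=
      ⟨Projectivization.mk F (u + lam • p) (hz0 lam), hnH lam⟩ with hvwdef
    have hvmem : vw ∈ lineVerts F q 2 W := hmemLV lam
    have hne : t ≠ vw := by
      intro h
      rw [← h] at hvmem
      exact hlv hvmem
    have hadj := hT ht (hsub hvmem) hne
    have htang : IsTangent F q 2 (Submodule.span F {t.1.rep, vw.1.rep}) :=
      ((NU_adj q t vw).1 hadj).2
    obtain ⟨c, hc⟩ := Projectivization.exists_smul_eq_mk_rep F (u + lam • p) (hz0 lam)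
    have hQvw : hermQ q vw.1.rep ≠ 0 := fun h => vw.2 h
    have hBtvw : hermB q t.1.rep vw.1.rep = 0 := by
      have hrep : vw.1.rep = (c : F) • (u + lam • p) := by
        rw [← hc, Units.smul_def]
      rw [hrep, hermB_smul_right, hBtw, mul_zero]
    exact not_tangent q hq2 hF φ hφ t.1.rep vw.1.rep hQt hQvw hBtvw htang
end

section
/- Let q be a prime power. The automorphism group of NU(3,q^2) does not act 3-transitively on tangent lines: if ℓ_1, ℓ_2, ℓ_3 are three distinct tangent lines of H(2,q^2) passing through a common point, and m_1, m_2, m_3 are three distinct tangent lines of H(2,q^2) whose three pairwise intersection points are distinct, then there is no automorphism g of NU(3,q^2) mapping, for each i, the set of non-isotropic points of ℓ_i onto the set of non-isotropic points of m_i. -/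
open Projectivization
open scoped LinearAlgebra.Projectivization

variable (F : Type) [Field F] [Fintype F]

/-- Two distinct lines of `PG(2,q²)` meet in at most one point. -/
lemma point_on_two_lines_unique {W₁ W₂ : Submodule F (Fin 3 → F)}
    (h₁ : IsLine F 2 W₁) (h₂ : IsLine F 2 W₂) (hne : W₁ ≠ W₂)
    {p p' : PG F 2} (hp₁ : p ∈ lineSet F 2 W₁) (hp₂ : p ∈ lineSet F 2 W₂)
    (hq₁ : p' ∈ lineSet F 2 W₁) (hq₂ : p' ∈ lineSet F 2 W₂) : p = p' := by
  have hb₁ : Module.finrank F W₁ = 2 := h₁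
  have hb₂ : Module.finrank F W₂ = 2 := h₂
  have hinf : Module.finrank F ↥(W₁ ⊓ W₂) ≤ 1 := by
    by_contra h
    push_neg at h
    have e₁ : W₁ ⊓ W₂ = W₁ := Submodule.eq_of_le_of_finrank_le inf_le_left (by omega)
    have e₂ : W₁ ⊓ W₂ = W₂ := Submodule.eq_of_le_of_finrank_le inf_le_right (by omega)
    exact hne (e₁ ▸ e₂)
  have hps : p.submodule = W₁ ⊓ W₂ :=
    Submodule.eq_of_le_of_finrank_le (le_inf hp₁ hp₂)
      (by rw [p.finrank_submodule]; exact hinf)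
  have hqs : p'.submodule = W₁ ⊓ W₂ :=
    Submodule.eq_of_le_of_finrank_le (le_inf hq₁ hq₂)
      (by rw [p'.finrank_submodule]; exact hinf)
  exact Projectivization.submodule_injective (hps.trans hqs.symm)

/-- Two lines of `PG(2,q²)` meet in at least one point. -/
lemma lines_meet {W₁ W₂ : Submodule F (Fin 3 → F)}
    (h₁ : IsLine F 2 W₁) (h₂ : IsLine F 2 W₂) :
    ∃ p : PG F 2, p ∈ lineSet F 2 W₁ ∧ p ∈ lineSet F 2 W₂ := by
  have hsum := Submodule.finrank_sup_add_finrank_inf_eq W₁ W₂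
  have hsup : Module.finrank F ↥(W₁ ⊔ W₂) ≤ 3 := by
    have := Submodule.finrank_le (W₁ ⊔ W₂)
    rwa [Module.finrank_fin_fun] at this
  rw [h₁, h₂] at hsum
  have hbot : W₁ ⊓ W₂ ≠ ⊥ := by
    intro h
    rw [h, finrank_bot] at hsum
    omega
  obtain ⟨v, hv, hv0⟩ := Submodule.exists_mem_ne_zero_of_ne_bot hbot
  refine ⟨Projectivization.mk F v hv0, ?_, ?_⟩ <;>
    · show (Projectivization.mk F v hv0).submodule ≤ _
      rw [Projectivization.submodule_mk, Submodule.span_singleton_le_iff_mem]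
      first | exact hv.1 | exact hv.2

/-- The automorphism group of `NU(3,q^2)` is not `3`-transitive on tangent
lines: no automorphism maps three concurrent tangents to three tangents whose pairwise
intersection points are distinct. -/
theorem aut_not_three_transitive_on_tangents (q : ℕ) (hq : IsPrimePow q)
    (hF : Fintype.card F = q ^ 2)
    (l₁ l₂ l₃ m₁ m₂ m₃ : Submodule F (Fin 3 → F))
    (hl₁ : IsTangent F q 2 l₁) (hl₂ : IsTangent F q 2 l₂) (hl₃ : IsTangent F q 2 l₃)
    (hm₁ : IsTangent F q 2 m₁) (hm₂ : IsTangent F q 2 m₂) (hm₃ : IsTangent F q 2 m₃)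
    (hl : l₁ ≠ l₂ ∧ l₁ ≠ l₃ ∧ l₂ ≠ l₃) (hm : m₁ ≠ m₂ ∧ m₁ ≠ m₃ ∧ m₂ ≠ m₃)
    (hconc : ∃ P : PG F 2,
      P ∈ lineSet F 2 l₁ ∧ P ∈ lineSet F 2 l₂ ∧ P ∈ lineSet F 2 l₃)
    (htri : ∀ P₁₂ P₁₃ P₂₃ : PG F 2,
      P₁₂ ∈ lineSet F 2 m₁ → P₁₂ ∈ lineSet F 2 m₂ →
      P₁₃ ∈ lineSet F 2 m₁ → P₁₃ ∈ lineSet F 2 m₃ →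
      P₂₃ ∈ lineSet F 2 m₂ → P₂₃ ∈ lineSet F 2 m₃ →
      P₁₂ ≠ P₁₃ ∧ P₁₂ ≠ P₂₃ ∧ P₁₃ ≠ P₂₃) :
    ¬ ∃ g : NU F q 2 ≃g NU F q 2,
        ⇑g '' lineVerts F q 2 l₁ = lineVerts F q 2 m₁ ∧
        ⇑g '' lineVerts F q 2 l₂ = lineVerts F q 2 m₂ ∧
        ⇑g '' lineVerts F q 2 l₃ = lineVerts F q 2 m₃ := by
  rintro ⟨g, hg₁, hg₂, hg₃⟩
  obtain ⟨P, hP₁, hP₂, hP₃⟩ := hconc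
  -- each tangent meets Herm in a unique point
  obtain ⟨a₁, ha₁⟩ := Set.ncard_eq_one.mp hm₁.2
  obtain ⟨a₂, ha₂⟩ := Set.ncard_eq_one.mp hm₂.2
  obtain ⟨a₃, ha₃⟩ := Set.ncard_eq_one.mp hm₃.2
  by_cases hPH : P ∈ Herm F q 2
  · -- the l-lines pairwise share only P, which is isotropic: pairwise lineVerts empty
    have hemptyL : ∀ (Wa Wb : Submodule F (Fin 3 → F)), IsLine F 2 Wa → IsLine F 2 Wb →
        Wa ≠ Wb → P ∈ lineSet F 2 Wa → P ∈ lineSet F 2 Wb →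
        lineVerts F q 2 Wa ∩ lineVerts F q 2 Wb = ∅ := by
      intro Wa Wb ha hb hne hPa hPb
      ext u
      simp only [Set.mem_inter_iff, Set.mem_empty_iff_false, iff_false]
      rintro ⟨hua, hub⟩
      have : u.1 = P := point_on_two_lines_unique F ha hb hne hua hub hPa hPb
      exact u.2 (this ▸ hPH)
    -- pairwise intersection points of the m-lines
    obtain ⟨Q₁₂, hQ₁₂a, hQ₁₂b⟩ := lines_meet F hm₁.1 hm₂.1
    obtain ⟨Q₁₃, hQ₁₃a, hQ₁₃b⟩ := lines_meet F hm₁.1 hm₃.1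
    obtain ⟨Q₂₃, hQ₂₃a, hQ₂₃b⟩ := lines_meet F hm₂.1 hm₃.1
    obtain ⟨hd₁, hd₂, hd₃⟩ := htri Q₁₂ Q₁₃ Q₂₃ hQ₁₂a hQ₁₂b hQ₁₃a hQ₁₃b hQ₂₃a hQ₂₃b
    -- at least one of the Q's is non-isotropic, since each tangent holds one Herm point
    have key : ∃ A B : Set {p : PG F 2 // p ∉ Herm F q 2}, A ∩ B = ∅ ∧
        ∃ u, u ∈ ⇑g '' A ∧ u ∈ ⇑g '' B := by
      by_cases h12 : Q₁₂ ∈ Herm F q 2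
      · have h13 : Q₁₃ ∉ Herm F q 2 := by
          intro h13
          have e12 : Q₁₂ = a₁ := by
            have : Q₁₂ ∈ lineSet F 2 m₁ ∩ Herm F q 2 := ⟨hQ₁₂a, h12⟩
            rwa [ha₁, Set.mem_singleton_iff] at this
          have e13 : Q₁₃ = a₁ := by
            have : Q₁₃ ∈ lineSet F 2 m₁ ∩ Herm F q 2 := ⟨hQ₁₃a, h13⟩
            rwa [ha₁, Set.mem_singleton_iff] at this
          exact hd₁ (e12.trans e13.symm)
        exact ⟨_, _, hemptyL l₁ l₃ hl₁.1 hl₃.1 hl.2.1 hP₁ hP₃,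
          ⟨Q₁₃, h13⟩, by rw [hg₁]; exact hQ₁₃a, by rw [hg₃]; exact hQ₁₃b⟩
      · exact ⟨_, _, hemptyL l₁ l₂ hl₁.1 hl₂.1 hl.1 hP₁ hP₂,
          ⟨Q₁₂, h12⟩, by rw [hg₁]; exact hQ₁₂a, by rw [hg₂]; exact hQ₁₂b⟩
    obtain ⟨A, B, hAB, u, huA, huB⟩ := key
    have hu : u ∈ ⇑g '' (A ∩ B) := by
      rw [Set.image_inter g.injective]; exact ⟨huA, huB⟩
    rw [hAB, Set.image_empty] at hu
    exact hu
  · -- P is a vertex on all three l-lines; its image lies on all three m-lines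
    set u : {p : PG F 2 // p ∉ Herm F q 2} := ⟨P, hPH⟩ with hu
    have h1 : g u ∈ lineVerts F q 2 m₁ := hg₁ ▸ ⟨u, hP₁, rfl⟩
    have h2 : g u ∈ lineVerts F q 2 m₂ := hg₂ ▸ ⟨u, hP₂, rfl⟩
    have h3 : g u ∈ lineVerts F q 2 m₃ := hg₃ ▸ ⟨u, hP₃, rfl⟩
    exact (htri (g u).1 (g u).1 (g u).1 h1 h2 h1 h3 h2 h3).1 rfl
end
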